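/- arXiv:2111.00499 — 6 statements merged into one kernel-verified Lean document; each statement's English description precedes it below -/
import Mathlib

section
/- Let α ∈ Z̄ be an algebraic integer. Then q(α) ≤ 1 if and only if α = 0 or α is a root of unity; moreover every root of unity ζ satisfies q(ζ) = 1. In particular q(α) ≥ 1 for every nonzero algebraic integer α, and the infimum of q(α) over nonzero α ∈ Z̄ equals 1. -/
open scoped ComplexConjugate ComplexOrder

noncomputable section

/-- An algebraic closure of `ℚ`. -/
abbrev Qbar : Type := AlgebraicClosure ℚ

/-- The ring of algebraic integers inside `Qbar`. -/
def Zbar : Subring Qbar := (integralClosure ℤ Qbar).toSubring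

/-- The subfield `ℚ(α, β)` of `Qbar`. -/
def Qbar.field2 (α β : Qbar) : IntermediateField ℚ Qbar :=
  IntermediateField.adjoin ℚ {α, β}

instance (α β : Qbar) : FiniteDimensional ℚ (Qbar.field2 α β) := by
  exact IntermediateField.finiteDimensional_adjoin fun x _ =>
    IsAlgebraic.isIntegral ((AlgebraicClosure.isAlgebraic ℚ).isAlgebraic x)

theorem Qbar.mem_field2_left (α β : Qbar) : α ∈ Qbar.field2 α β :=
  IntermediateField.subset_adjoin ℚ _ (Set.mem_insert _ _)

theorem Qbar.mem_field2_right (α β : Qbar) : β ∈ Qbar.field2 α β :=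
  IntermediateField.subset_adjoin ℚ _ (Set.mem_insert_of_mem _ rfl)

/-- The normalized inner product on `Qbar`:
`⟨α, β⟩ = (1/[L:ℚ]) ∑_{σ : L → ℂ} σ(α) * conj (σ(β))` with `L = ℚ(α, β)`. -/
def qInner (α β : Qbar) : ℂ :=
  (Module.finrank ℚ (Qbar.field2 α β) : ℂ)⁻¹ *
    ∑ σ : Qbar.field2 α β →ₐ[ℚ] ℂ,
      σ ⟨α, Qbar.mem_field2_left α β⟩ * conj (σ ⟨β, Qbar.mem_field2_right α β⟩)

/-- `(β, γ)` is a decomposition of `α` in `Zbar`. -/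
def IsDecompositionOf (α β γ : Qbar) : Prop :=
  β ∈ Zbar ∧ γ ∈ Zbar ∧ α = β + γ ∧ 0 ≤ qInner β γ

/-- `α` is an indecomposable algebraic integer. -/
def IsIndecomposable (α : Qbar) : Prop :=
  α ∈ Zbar ∧ α ≠ 0 ∧ ∀ β γ : Qbar, IsDecompositionOf α β γ → β = 0 ∨ γ = 0

/-- `ζ` is a root of unity in `Qbar`. -/
def IsRootOfUnity (ζ : Qbar) : Prop := ∃ n : ℕ, 0 < n ∧ ζ ^ n = 1


/-! ### Auxiliary lemmas -/

private theorem aux_pow_eq_one {x : ℝ} (hx : 0 ≤ x) {n : ℕ} (hn : n ≠ 0) (h : x ^ n = 1) :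
    x = 1 := by
  rcases lt_trichotomy x 1 with h1 | h1 | h1
  · have := pow_lt_one₀ hx h1 hn
    simp [h] at this
  · exact h1
  · have := one_lt_pow₀ h1 hn
    simp [h] at this

/-- Elementary real inequality: if positive reals have product at least 1, their sum is at
least the cardinality; and if the sum is at most the cardinality, all of them equal 1. -/
private theorem aux_sum_card {ι : Type*} [Fintype ι] (f : ι → ℝ) (hf : ∀ i, 0 < f i)
    (hprod : 1 ≤ ∏ i, f i) :
    ((Fintype.card ι : ℝ) ≤ ∑ i, f i) ∧
    ((∑ i, f i) ≤ (Fintype.card ι : ℝ) → ∀ i, f i = 1) := by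
  have hlog : 0 ≤ ∑ i, Real.log (f i) := by
    rw [← Real.log_prod fun i _ => (hf i).ne']
    exact Real.log_nonneg hprod
  have h1 : ∀ i ∈ Finset.univ, Real.log (f i) ≤ f i - 1 :=
    fun i _ => Real.log_le_sub_one_of_pos (hf i)
  have hsum : ∑ i, (f i - 1) = (∑ i, f i) - Fintype.card ι := by
    rw [Finset.sum_sub_distrib]
    simp [Finset.card_univ]
  constructor
  · have h2 := Finset.sum_le_sum h1
    rw [hsum] at h2
    linarith [hlog.trans h2]
  · intro hle i
    by_contra hne
    have hstrict : ∑ j, Real.log (f j) < ∑ j, (f j - 1) :=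
      Finset.sum_lt_sum h1 ⟨i, Finset.mem_univ i, Real.log_lt_sub_one_of_pos (hf i) hne⟩
    rw [hsum] at hstrict
    linarith

private theorem qInner_self_eq (α : Qbar) :
    qInner α α = (((Module.finrank ℚ (Qbar.field2 α α) : ℝ)⁻¹ *
      ∑ σ : Qbar.field2 α α →ₐ[ℚ] ℂ,
        Complex.normSq (σ ⟨α, Qbar.mem_field2_left α α⟩) : ℝ) : ℂ) := by
  rw [qInner]
  push_cast
  congr 1
  exact Finset.sum_congr rfl fun σ _ => (Complex.mul_conj _)

private theorem card_algHom_eq (α : Qbar) :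
    Fintype.card (Qbar.field2 α α →ₐ[ℚ] ℂ) = Module.finrank ℚ (Qbar.field2 α α) := by
  haveI : CharZero (Qbar.field2 α α) :=
    charZero_of_injective_algebraMap (algebraMap ℚ _).injective
  exact AlgHom.card ℚ (Qbar.field2 α α) ℂ

/-- Roots of unity satisfy `q = 1`. -/
private theorem qInner_rootOfUnity (ζ : Qbar) (h : IsRootOfUnity ζ) : qInner ζ ζ = 1 := by
  obtain ⟨n, hn, hζ⟩ := h
  set L := Qbar.field2 ζ ζ
  set a : L := ⟨ζ, Qbar.mem_field2_left ζ ζ⟩ with ha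
  have hapow : a ^ n = 1 := by
    apply Subtype.ext
    push_cast [ha]
    exact hζ
  have hone : ∀ σ : L →ₐ[ℚ] ℂ, Complex.normSq (σ a) = 1 := by
    intro σ
    have h2 : Complex.normSq (σ a) ^ n = 1 := by
      rw [← map_pow, ← map_pow, hapow, map_one, map_one]
    exact aux_pow_eq_one (Complex.normSq_nonneg _) hn.ne' h2
  have hpos : 0 < Module.finrank ℚ L := Module.finrank_pos
  rw [qInner_self_eq]
  rw [show ∑ σ : L →ₐ[ℚ] ℂ, Complex.normSq (σ a) = (Module.finrank ℚ L : ℝ) by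
    simp [hone, Finset.card_univ, card_algHom_eq ζ]]
  rw [inv_mul_cancel₀ (by positivity)]
  norm_num

/-- The core estimate for nonzero algebraic integers. -/
private theorem qInner_core (α : Qbar) (hα : α ∈ Zbar) (h0 : α ≠ 0) :
    (1 : ℂ) ≤ qInner α α ∧ (qInner α α ≤ 1 → IsRootOfUnity α) := by
  set L := Qbar.field2 α α with hLdef
  haveI : CharZero L := charZero_of_injective_algebraMap (algebraMap ℚ _).injective
  haveI : NumberField L := ⟨⟩
  set a : L := ⟨α, Qbar.mem_field2_left α α⟩ with ha
  have hane : a ≠ 0 := by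
    intro h
    exact h0 (by simpa [ha] using congrArg Subtype.val h)
  have haint : IsIntegral ℤ a := by
    rw [← isIntegral_algebraMap_iff (algebraMap L Qbar).injective]
    exact hα
  -- the norm is a nonzero rational integer
  have hnormint : IsIntegral ℤ (Algebra.norm ℚ a) := Algebra.isIntegral_norm ℚ haint
  obtain ⟨z, hz⟩ := IsIntegrallyClosed.isIntegral_iff.mp hnormint
  have hnz : Algebra.norm ℚ a ≠ 0 := Algebra.norm_ne_zero_iff.mpr hane
  have hzq : algebraMap ℤ ℚ z = (z : ℚ) := by simp
  have habs : 1 ≤ |Algebra.norm ℚ a| := by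
    have hz0 : z ≠ 0 := fun h => hnz (by rw [← hz, h, map_zero])
    rw [← hz, hzq, ← Int.cast_abs]
    exact_mod_cast Int.one_le_abs hz0
  -- the product of the |σ a|² is at least 1
  have hprodeq : ∏ σ : L →ₐ[ℚ] ℂ, Complex.normSq (σ a)
      = Complex.normSq (algebraMap ℚ ℂ (Algebra.norm ℚ a)) := by
    rw [Algebra.norm_eq_prod_embeddings ℚ ℂ a, map_prod Complex.normSq]
  have hprod : 1 ≤ ∏ σ : L →ₐ[ℚ] ℂ, Complex.normSq (σ a) := by
    rw [hprodeq]
    have he : algebraMap ℚ ℂ (Algebra.norm ℚ a) = ((Algebra.norm ℚ a : ℚ) : ℂ) := by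
      simp [eq_ratCast]
    rw [he]
    have h2 : Complex.normSq ((Algebra.norm ℚ a : ℚ) : ℂ)
        = |((Algebra.norm ℚ a : ℚ) : ℝ)| * |((Algebra.norm ℚ a : ℚ) : ℝ)| := by
      rw [Complex.normSq_apply]
      push_cast
      simp [abs_mul_abs_self]
    rw [h2]
    have h1 : (1:ℝ) ≤ |((Algebra.norm ℚ a : ℚ) : ℝ)| := by
      rw [← Rat.cast_abs]
      exact_mod_cast habs
    nlinarith
  have hfpos : ∀ σ : L →ₐ[ℚ] ℂ, 0 < Complex.normSq (σ a) := fun σ =>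
    Complex.normSq_pos.mpr ((map_ne_zero σ).mpr hane)
  obtain ⟨hge, heq⟩ := aux_sum_card (fun σ : L →ₐ[ℚ] ℂ => Complex.normSq (σ a)) hfpos hprod
  rw [card_algHom_eq α] at hge heq
  have hpos : (0:ℝ) < Module.finrank ℚ L := by
    exact_mod_cast Module.finrank_pos
  constructor
  · rw [qInner_self_eq, show (1:ℂ) = ((1:ℝ):ℂ) by norm_num, Complex.real_le_real]
    rw [le_inv_mul_iff₀ hpos, mul_one]
    exact hge
  · intro hle
    rw [qInner_self_eq, show (1:ℂ) = ((1:ℝ):ℂ) by norm_num, Complex.real_le_real,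
      inv_mul_le_iff₀ hpos, mul_one] at hle
    have hall := heq hle
    have hnorm1 : ∀ φ : L →+* ℂ, ‖φ a‖ = 1 := by
      intro φ
      have h3 : Complex.normSq (φ a) = 1 := hall φ.toRatAlgHom
      have h2 : ‖φ a‖ ^ 2 = 1 := by
        rw [Complex.sq_norm, h3]
      exact aux_pow_eq_one (norm_nonneg _) two_ne_zero h2
    obtain ⟨n, hn, hpow⟩ :=
      NumberField.Embeddings.pow_eq_one_of_norm_eq_one L ℂ haint hnorm1
    refine ⟨n, hn, ?_⟩
    have h4 := congrArg (Subtype.val : L → Qbar) hpow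
    push_cast [ha] at h4
    exact h4

private theorem qInner_zero : qInner 0 0 = 0 := by
  rw [qInner, Finset.sum_eq_zero, mul_zero]
  intro σ _
  have h0 : (⟨(0:Qbar), Qbar.mem_field2_left 0 0⟩ : Qbar.field2 0 0) = 0 := Subtype.ext rfl
  rw [h0, map_zero, zero_mul]

/-- For an algebraic integer `α` we have `q(α) ≤ 1` iff `α = 0` or `α` is a root of unity;
roots of unity have `q = 1`; `q(α) ≥ 1` for nonzero algebraic integers `α`, and the infimum
of `q` over the nonzero algebraic integers is `1`. -/
theorem q_le_one_iff_zero_or_rootOfUnity :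
    (∀ α : Qbar, α ∈ Zbar → (qInner α α ≤ 1 ↔ α = 0 ∨ IsRootOfUnity α)) ∧
    (∀ ζ : Qbar, IsRootOfUnity ζ → qInner ζ ζ = 1) ∧
    (∀ α : Qbar, α ∈ Zbar → α ≠ 0 → (1 : ℂ) ≤ qInner α α) ∧
    IsGLB {x : ℝ | ∃ α : Qbar, α ∈ Zbar ∧ α ≠ 0 ∧ qInner α α = (x : ℂ)} 1 := by
  have hiff : ∀ α : Qbar, α ∈ Zbar → (qInner α α ≤ 1 ↔ α = 0 ∨ IsRootOfUnity α) := by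
    intro α hα
    constructor
    · intro hle
      by_cases h0 : α = 0
      · exact Or.inl h0
      · exact Or.inr ((qInner_core α hα h0).2 hle)
    · rintro (rfl | h)
      · rw [qInner_zero]
        exact zero_le_one
      · rw [qInner_rootOfUnity α h]
  have hlb : ∀ x ∈ {x : ℝ | ∃ α : Qbar, α ∈ Zbar ∧ α ≠ 0 ∧ qInner α α = (x : ℂ)},
      (1:ℝ) ≤ x := by
    rintro x ⟨α, hα, h0, hq⟩
    have h1 := (qInner_core α hα h0).1
    rw [hq, show (1:ℂ) = ((1:ℝ):ℂ) by norm_num, Complex.real_le_real] at h1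
    exact h1
  have h1mem : (1:ℝ) ∈ {x : ℝ | ∃ α : Qbar, α ∈ Zbar ∧ α ≠ 0 ∧ qInner α α = (x : ℂ)} := by
    refine ⟨1, one_mem Zbar, one_ne_zero, ?_⟩
    rw [qInner_rootOfUnity 1 ⟨1, one_pos, one_pow 1⟩]
    norm_num
  exact ⟨hiff, fun ζ h => qInner_rootOfUnity ζ h,
    fun α hα h0 => (qInner_core α hα h0).1,
    ⟨hlb, fun b hb => hb h1mem⟩⟩


end
end

section
/- Let α ∈ Z̄ be an algebraic integer. (i) If 0 < q(α) < 2, then α is indecomposable. (ii) If q(α) = 2, then α has a nontrivial decomposition if and only if α = ζ + ξ for some roots of unity ζ, ξ ∈ Z̄; in that case ⟨ζ, ξ⟩ = 0, the pair {ζ, ξ} is uniquely determined by α up to ordering, and [ℚ(α, ζ) : ℚ(α)] ≤ 2. -/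
open scoped ComplexConjugate ComplexOrder

noncomputable section

/-- The subfield `ℚ(α)` of `Qbar`. -/
def Qbar.field1 (α : Qbar) : IntermediateField ℚ Qbar := IntermediateField.adjoin ℚ {α}

namespace QAux

open Module

/-- AM-GM via logarithms. -/
theorem key_real {ι : Type*} [Fintype ι] (t : ι → ℝ) (ht : ∀ i, 0 < t i)
    (hprod : 1 ≤ ∏ i, t i) :
    (Fintype.card ι : ℝ) ≤ ∑ i, t i ∧
      (∑ i, t i = Fintype.card ι → ∀ i, t i = 1) := by
  have hlog : Real.log (∏ i, t i) = ∑ i, Real.log (t i) :=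
    Real.log_prod (fun i _ => (ht i).ne')
  have hlognn : 0 ≤ ∑ i, Real.log (t i) := by
    rw [← hlog]; exact Real.log_nonneg hprod
  have hterm : ∀ i, Real.log (t i) ≤ t i - 1 :=
    fun i => Real.log_le_sub_one_of_pos (ht i)
  have hsum : ∑ i, Real.log (t i) ≤ ∑ i, (t i - 1) := Finset.sum_le_sum fun i _ => hterm i
  have hsimp : ∑ i, (t i - 1) = (∑ i, t i) - Fintype.card ι := by
    rw [Finset.sum_sub_distrib]; simp [Finset.card_univ]
  constructor
  · nlinarith [hlognn, hsum, hsimp]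
  · intro heq i
    by_contra hne
    have hstrict : Real.log (t i) < t i - 1 := Real.log_lt_sub_one_of_pos (ht i) hne
    have : ∑ j, Real.log (t j) < ∑ j, (t j - 1) := by
      apply Finset.sum_lt_sum (fun j _ => hterm j) ⟨i, Finset.mem_univ i, hstrict⟩
    rw [hsimp, heq] at this
    simp at this
    linarith

theorem real_pow_eq_one {a : ℝ} (ha : 0 ≤ a) {n : ℕ} (hn : 0 < n) (h : a ^ n = 1) :
    a = 1 := by
  rcases lt_trichotomy a 1 with h1 | h1 | h1
  · have := pow_lt_one₀ ha h1 hn.ne'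
    linarith
  · exact h1
  · have := one_lt_pow₀ h1 hn.ne'
    linarith

/-- The unnormalized hermitian sum over embeddings. -/
def eSum (K : Type*) [Field K] [Algebra ℚ K] [FiniteDimensional ℚ K] (x y : K) : ℂ :=
  ∑ σ : K →ₐ[ℚ] ℂ, σ x * conj (σ y)

section Abstract

variable {K : Type*} [Field K] [Algebra ℚ K] [FiniteDimensional ℚ K]

theorem card_emb (K : Type*) [Field K] [Algebra ℚ K] [FiniteDimensional ℚ K] :
    Fintype.card (K →ₐ[ℚ] ℂ) = finrank ℚ K := by
  rw [← Nat.card_eq_fintype_card, ← Field.finSepDegree_eq_of_isAlgClosed,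
    Field.finSepDegree_eq_finrank_of_isSeparable]

theorem conj_eSum (x y : K) : conj (eSum K x y) = eSum K x y := by
  let c : ℂ →ₐ[ℚ] ℂ := (starRingEnd ℂ : ℂ →+* ℂ).toRatAlgHom
  have hc : ∀ w : ℂ, c w = conj w := fun w => rfl
  have hinv : Function.Involutive (fun σ : K →ₐ[ℚ] ℂ => c.comp σ) := by
    intro σ; ext z
    simp only [AlgHom.comp_apply, hc, Complex.conj_conj]
  rw [eSum, map_sum]
  refine Fintype.sum_equiv hinv.toPerm _ _ fun σ => ?_
  simp only [Function.Involutive.coe_toPerm, AlgHom.comp_apply, hc, Complex.conj_conj, map_mul]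
  try ring

theorem eSum_im (x y : K) : (eSum K x y).im = 0 := by
  have := conj_eSum x y
  rw [Complex.ext_iff] at this
  have h2 := this.2
  simp only [Complex.conj_im] at h2
  linarith

theorem eSum_real (x y : K) : eSum K x y = (((eSum K x y).re : ℝ) : ℂ) := by
  rw [Complex.ext_iff]
  constructor
  · simp
  · simp [eSum_im]

theorem eSum_comm (x y : K) : eSum K x y = eSum K y x := by
  rw [← conj_eSum x y, eSum, map_sum, eSum]
  congr 1; ext σ; rw [map_mul, Complex.conj_conj]; ring

theorem eSum_add_left (x y z : K) : eSum K (x + y) z = eSum K x z + eSum K y z := by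
  simp [eSum, map_add, add_mul, Finset.sum_add_distrib]

theorem eSum_add_right (x y z : K) : eSum K x (y + z) = eSum K x y + eSum K x z := by
  rw [eSum_comm, eSum_add_left, eSum_comm y x, eSum_comm z x]

theorem eSum_self (x : K) : eSum K x x = ((∑ σ : K →ₐ[ℚ] ℂ, ‖σ x‖ ^ 2 : ℝ) : ℂ) := by
  rw [eSum, Complex.ofReal_sum]
  congr 1; ext σ
  rw [Complex.mul_conj']
  norm_cast

theorem eSum_tower (M L : Type*) [Field M] [Field L] [Algebra ℚ M] [Algebra ℚ L]
    [Algebra M L] [IsScalarTower ℚ M L] [FiniteDimensional ℚ L] [FiniteDimensional ℚ M]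
    (x y : M) :
    eSum L (algebraMap M L x) (algebraMap M L y) = (finrank M L : ℂ) * eSum M x y := by
  haveI : FiniteDimensional M L := FiniteDimensional.right ℚ M L
  let e := algHomEquivSigma (A := ℚ) (B := M) (C := L) (D := ℂ)
  rw [eSum, ← e.symm.sum_comp (fun σ : L →ₐ[ℚ] ℂ =>
    σ (algebraMap M L x) * conj (σ (algebraMap M L y)))]
  rw [← Finset.univ_sigma_univ, Finset.sum_sigma]
  rw [eSum, Finset.mul_sum]
  congr 1; ext τ
  have hval : ∀ g : @AlgHom M L ℂ _ _ _ _ τ.toRingHom.toAlgebra,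
      (e.symm ⟨τ, g⟩) (algebraMap M L x) * conj ((e.symm ⟨τ, g⟩) (algebraMap M L y))
        = τ x * conj (τ y) := by
    intro g
    have h1 : ∀ z : M, (e.symm ⟨τ, g⟩) (algebraMap M L z) = τ z := by
      intro z
      letI := τ.toRingHom.toAlgebra
      have h0 : (e.symm ⟨τ, g⟩) (algebraMap M L z) = g (algebraMap M L z) := rfl
      rw [h0]; exact g.commutes z
    rw [h1, h1]
  rw [Finset.sum_congr rfl (fun g _ => hval g), Finset.sum_const]
  have hcard : (Finset.univ.card : ℕ) =
      @Fintype.card (@AlgHom M L ℂ _ _ _ _ τ.toRingHom.toAlgebra) _ := rfl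
  rw [hcard]
  haveI : CharZero M := charZero_of_injective_algebraMap (algebraMap ℚ M).injective
  have : @Fintype.card (@AlgHom M L ℂ _ _ _ _ τ.toRingHom.toAlgebra) _ = finrank M L := by
    letI := τ.toRingHom.toAlgebra
    rw [← Nat.card_eq_fintype_card, ← Field.finSepDegree_eq_of_isAlgClosed,
      Field.finSepDegree_eq_finrank_of_isSeparable]
  rw [this, nsmul_eq_mul]

theorem norms_prod (x : K) (hx : IsIntegral ℤ x) (hx0 : x ≠ 0) :
    1 ≤ ∏ σ : K →ₐ[ℚ] ℂ, ‖σ x‖ ^ 2 := by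
  have hN : algebraMap ℚ ℂ (Algebra.norm ℚ x) = ∏ σ : K →ₐ[ℚ] ℂ, σ x :=
    Algebra.norm_eq_prod_embeddings ℚ ℂ x
  have hNint : IsIntegral ℤ (Algebra.norm ℚ x) := Algebra.isIntegral_norm ℚ hx
  obtain ⟨m, hm⟩ := IsIntegrallyClosed.isIntegral_iff.mp hNint
  have hNne : Algebra.norm ℚ x ≠ 0 := by
    rw [Algebra.norm_ne_zero_iff]; exact hx0
  have hm0 : m ≠ 0 := by rintro rfl; simp at hm; exact hNne hm.symm
  have h1 : (1 : ℝ) ≤ |(m : ℝ)| := by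
    rw [← Int.cast_abs]
    exact_mod_cast Int.one_le_abs hm0
  have hprod : ∏ σ : K →ₐ[ℚ] ℂ, ‖σ x‖ = ‖algebraMap ℚ ℂ (Algebra.norm ℚ x)‖ := by
    rw [hN, norm_prod]
  have hge : (1 : ℝ) ≤ ∏ σ : K →ₐ[ℚ] ℂ, ‖σ x‖ := by
    rw [hprod, ← hm]
    have : ‖algebraMap ℚ ℂ (algebraMap ℤ ℚ m)‖ = |(m : ℝ)| := by
      simp [eq_ratCast, Rat.cast_intCast, Complex.norm_intCast]
    rw [this]; exact h1
  calc (1 : ℝ) = 1 * 1 := by ring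
  _ ≤ (∏ σ : K →ₐ[ℚ] ℂ, ‖σ x‖) * (∏ σ : K →ₐ[ℚ] ℂ, ‖σ x‖) :=
      mul_le_mul hge hge one_pos.le (le_trans one_pos.le hge)
  _ = ∏ σ : K →ₐ[ℚ] ℂ, ‖σ x‖ ^ 2 := by
      rw [← Finset.prod_mul_distrib]; congr 1; ext σ; ring

theorem eSum_self_lb (x : K) (hx : IsIntegral ℤ x) (hx0 : x ≠ 0) :
    (finrank ℚ K : ℝ) ≤ (eSum K x x).re := by
  have hpos : ∀ σ : K →ₐ[ℚ] ℂ, 0 < ‖σ x‖ ^ 2 := by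
    intro σ
    have : σ x ≠ 0 := by
      simpa using (map_ne_zero (σ : K →+* ℂ)).mpr hx0
    exact pow_pos (norm_pos_iff.mpr this) 2
  have h := (key_real _ hpos (norms_prod x hx hx0)).1
  rw [card_emb K] at h
  have hre : (eSum K x x).re = ∑ σ : K →ₐ[ℚ] ℂ, ‖σ x‖ ^ 2 := by
    rw [eSum_self]; exact Complex.ofReal_re _
  rw [hre]
  exact h

theorem eSum_self_eq_rootOfUnity (x : K) (hx : IsIntegral ℤ x) (hx0 : x ≠ 0)
    (heq : (eSum K x x).re = (finrank ℚ K : ℝ)) :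
    ∃ n : ℕ, 0 < n ∧ x ^ n = 1 := by
  have hre : (eSum K x x).re = ∑ σ : K →ₐ[ℚ] ℂ, ‖σ x‖ ^ 2 := by
    rw [eSum_self]; exact Complex.ofReal_re _
  rw [hre] at heq
  have hpos : ∀ σ : K →ₐ[ℚ] ℂ, 0 < ‖σ x‖ ^ 2 := by
    intro σ
    have : σ x ≠ 0 := by
      simpa using (map_ne_zero (σ : K →+* ℂ)).mpr hx0
    exact pow_pos (norm_pos_iff.mpr this) 2
  have hcard : ((Fintype.card (K →ₐ[ℚ] ℂ) : ℕ) : ℝ) = (finrank ℚ K : ℝ) := by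
    rw [card_emb K]
  have h := (key_real _ hpos (norms_prod x hx hx0)).2 (by rw [heq, hcard])
  haveI : CharZero K := charZero_of_injective_algebraMap (algebraMap ℚ K).injective
  haveI : NumberField K := by
    have hsub := Subsingleton.elim (DivisionRing.toRatAlgebra : Algebra ℚ K) ‹Algebra ℚ K›
    exact { to_charZero := ‹_›, to_finiteDimensional := by rw [hsub]; infer_instance }
  obtain ⟨n, hn, hxn⟩ := NumberField.Embeddings.pow_eq_one_of_norm_eq_one K ℂ hx (fun φ => by
    have h1 : ‖φ.toRatAlgHom x‖ ^ 2 = 1 := h φ.toRatAlgHom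
    have h2 : (0 : ℝ) ≤ ‖φ.toRatAlgHom x‖ := norm_nonneg _
    have h3 : ‖φ.toRatAlgHom x‖ = 1 := real_pow_eq_one h2 two_pos h1
    simpa using h3)
  exact ⟨n, hn, hxn⟩

theorem eSum_self_rootOfUnity (x : K) {m : ℕ} (hm : 0 < m) (hx : x ^ m = 1) :
    (eSum K x x).re = (finrank ℚ K : ℝ) := by
  have hre : (eSum K x x).re = ∑ σ : K →ₐ[ℚ] ℂ, ‖σ x‖ ^ 2 := by
    rw [eSum_self]; exact Complex.ofReal_re _
  rw [hre]
  have hone : ∀ σ : K →ₐ[ℚ] ℂ, ‖σ x‖ ^ 2 = 1 := by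
    intro σ
    have h1 : (σ x) ^ m = 1 := by rw [← map_pow, hx, map_one]
    have h2 : ‖σ x‖ ^ m = 1 := by rw [← norm_pow, h1, norm_one]
    have h3 : ‖σ x‖ = 1 := real_pow_eq_one (norm_nonneg _) hm h2
    rw [h3]; norm_num
  rw [Finset.sum_congr rfl (fun σ _ => hone σ), Finset.sum_const, Finset.card_univ,
    card_emb K, nsmul_eq_mul, mul_one]

end Abstract

/-- Uniqueness of unit-circle pair decompositions in `ℂ`. -/
theorem complex_pair {u v u' v' : ℂ} (hu : ‖u‖ = 1) (hv : ‖v‖ = 1) (hu' : ‖u'‖ = 1)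
    (hv' : ‖v'‖ = 1) (hs : u + v = u' + v') (hne : u + v ≠ 0) :
    (u' = u ∧ v' = v) ∨ (u' = v ∧ v' = u) := by
  have h1 : u * conj u = 1 := by rw [Complex.mul_conj', hu]; norm_num
  have h2 : v * conj v = 1 := by rw [Complex.mul_conj', hv]; norm_num
  have h3 : u' * conj u' = 1 := by rw [Complex.mul_conj', hu']; norm_num
  have h4 : v' * conj v' = 1 := by rw [Complex.mul_conj', hv']; norm_num
  have hcne : conj (u + v) ≠ 0 := by
    intro h0
    apply hne
    have := congrArg (starRingEnd ℂ) h0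
    simpa using this
  have e1 : u * v * conj (u + v) = u + v := by
    rw [map_add]
    linear_combination v * h1 + u * h2
  have e2 : u' * v' * conj (u + v) = u + v := by
    rw [hs, map_add]
    linear_combination v' * h3 + u' * h4
  have hprod : u * v = u' * v' := by
    have := e1.trans e2.symm
    exact mul_right_cancel₀ hcne this
  have hz : (u' - u) * (u' - v) = 0 := by
    linear_combination (-u') * hs + hprod
  rcases mul_eq_zero.mp hz with h | h
  · left
    have hu'u : u' = u := sub_eq_zero.mp h
    refine ⟨hu'u, ?_⟩
    have h5 : u + v = u + v' := by rw [hs, hu'u]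
    exact (add_left_cancel h5).symm
  · right
    have hu'v : u' = v := sub_eq_zero.mp h
    constructor
    · exact hu'v
    · have h5 : v + u = v + v' := by rw [add_comm v u, hs, hu'v]
      exact (add_left_cancel h5).symm

end QAux
namespace QAux2

open Module QAux IntermediateField

instance (α : Qbar) : FiniteDimensional ℚ (Qbar.field1 α) :=
  IntermediateField.finiteDimensional_adjoin fun x _ =>
    IsAlgebraic.isIntegral ((AlgebraicClosure.isAlgebraic ℚ).isAlgebraic x)

theorem subtype_isIntegral {L : IntermediateField ℚ Qbar} {x : Qbar}
    (hx : IsIntegral ℤ x) (hxL : x ∈ L) : IsIntegral ℤ (⟨x, hxL⟩ : L) := by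
  have hinj : Function.Injective (algebraMap (↥L) Qbar) :=
    (algebraMap (↥L) Qbar).injective
  exact (isIntegral_algebraMap_iff hinj).mp hx

theorem subtype_ne_zero {L : IntermediateField ℚ Qbar} {x : Qbar}
    (hx : x ≠ 0) (hxL : x ∈ L) : (⟨x, hxL⟩ : L) ≠ 0 := by
  intro h
  exact hx (congrArg Subtype.val h)

set_option maxHeartbeats 1000000 in
set_option synthInstance.maxHeartbeats 400000 in
theorem qInner_mem (L : IntermediateField ℚ Qbar) [FiniteDimensional ℚ L] {α β : Qbar}
    (hα : α ∈ L) (hβ : β ∈ L) :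
    qInner α β = (finrank ℚ L : ℂ)⁻¹ * eSum L ⟨α, hα⟩ ⟨β, hβ⟩ := by
  have hsub : Qbar.field2 α β ≤ L := by
    apply IntermediateField.adjoin_le_iff.mpr
    intro x hx
    rcases hx with rfl | hx
    · exact hα
    · rw [Set.mem_singleton_iff] at hx; subst hx; exact hβ
  letI : Algebra (Qbar.field2 α β) L := (IntermediateField.inclusion hsub).toAlgebra
  haveI : IsScalarTower ℚ (Qbar.field2 α β) L := IsScalarTower.of_algebraMap_eq' rfl
  have ht := eSum_tower (Qbar.field2 α β) L
    (⟨α, Qbar.mem_field2_left α β⟩ : Qbar.field2 α β)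
    (⟨β, Qbar.mem_field2_right α β⟩ : Qbar.field2 α β)
  have hmapα : algebraMap (Qbar.field2 α β) L (⟨α, Qbar.mem_field2_left α β⟩ : Qbar.field2 α β)
      = (⟨α, hα⟩ : L) := rfl
  have hmapβ : algebraMap (Qbar.field2 α β) L (⟨β, Qbar.mem_field2_right α β⟩ : Qbar.field2 α β)
      = (⟨β, hβ⟩ : L) := rfl
  rw [hmapα, hmapβ] at ht
  haveI : FiniteDimensional (Qbar.field2 α β) L :=
    FiniteDimensional.right ℚ (Qbar.field2 α β) L
  have hrank : finrank ℚ (Qbar.field2 α β) * finrank (Qbar.field2 α β) L = finrank ℚ L :=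
    Module.finrank_mul_finrank ℚ (Qbar.field2 α β) L
  have hM0 : ((finrank ℚ (Qbar.field2 α β) : ℂ)) ≠ 0 :=
    Nat.cast_ne_zero.mpr Module.finrank_pos.ne'
  have hd0 : ((finrank (Qbar.field2 α β) L : ℂ)) ≠ 0 :=
    Nat.cast_ne_zero.mpr Module.finrank_pos.ne'
  have hq : qInner α β = (finrank ℚ (Qbar.field2 α β) : ℂ)⁻¹ *
      eSum (Qbar.field2 α β) ⟨α, Qbar.mem_field2_left α β⟩ ⟨β, Qbar.mem_field2_right α β⟩ := rfl
  rw [hq, ht, ← hrank]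
  push_cast
  field_simp

theorem qInner_ofReal (L : IntermediateField ℚ Qbar) [FiniteDimensional ℚ L] {α β : Qbar}
    (hα : α ∈ L) (hβ : β ∈ L) :
    qInner α β =
      Complex.ofReal ((finrank ℚ L : ℝ)⁻¹ * (eSum L ⟨α, hα⟩ ⟨β, hβ⟩).re) := by
  rw [qInner_mem L hα hβ]
  rw [eSum_real]
  simp only [Complex.ofReal_re]
  push_cast
  ring

theorem qInner_zero : qInner (0 : Qbar) 0 = 0 := by
  have h0 : (0 : Qbar) ∈ Qbar.field2 (0 : Qbar) 0 := Qbar.mem_field2_left 0 0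
  rw [qInner_ofReal (Qbar.field2 (0 : Qbar) 0) h0 h0]
  have hz : (⟨(0 : Qbar), h0⟩ : Qbar.field2 (0 : Qbar) 0) = 0 := rfl
  rw [hz]
  have : eSum (Qbar.field2 (0 : Qbar) 0) 0 0 = 0 := by
    simp [eSum]
  rw [this]
  simp

theorem eSum_decomp (L : IntermediateField ℚ Qbar) [FiniteDimensional ℚ L] {α β γ : Qbar}
    (hβ : β ∈ L) (hγ : γ ∈ L) (hαβγ : α = β + γ) (hα : α ∈ L) :
    (eSum L ⟨α, hα⟩ ⟨α, hα⟩).re =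
      (eSum L ⟨β, hβ⟩ ⟨β, hβ⟩).re + (eSum L ⟨γ, hγ⟩ ⟨γ, hγ⟩).re +
        2 * (eSum L ⟨β, hβ⟩ ⟨γ, hγ⟩).re := by
  have hval : (⟨α, hα⟩ : L) = ⟨β, hβ⟩ + ⟨γ, hγ⟩ := by
    apply Subtype.ext
    exact hαβγ
  rw [hval, eSum_add_left, eSum_add_right, eSum_add_right,
    eSum_comm (⟨γ, hγ⟩ : L) (⟨β, hβ⟩ : L)]
  simp only [Complex.add_re]
  ring

theorem rootOfUnity_isIntegral {ζ : Qbar} (h : IsRootOfUnity ζ) : IsIntegral ℤ ζ := by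
  obtain ⟨m, hm, hζ⟩ := h
  refine ⟨Polynomial.X ^ m - Polynomial.C 1, Polynomial.monic_X_pow_sub_C 1 hm.ne', ?_⟩
  simp [hζ]

theorem rootOfUnity_ne_zero {ζ : Qbar} (h : IsRootOfUnity ζ) : ζ ≠ 0 := by
  obtain ⟨m, hm, hζ⟩ := h
  intro h0
  rw [h0, zero_pow hm.ne'] at hζ
  exact zero_ne_one hζ

theorem subtype_pow_eq_one {L : IntermediateField ℚ Qbar} {ζ : Qbar} {m : ℕ}
    (hζ : ζ ^ m = 1) (hζL : ζ ∈ L) : (⟨ζ, hζL⟩ : L) ^ m = 1 := by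
  apply Subtype.ext
  push_cast
  exact hζ

/-- Orthogonality: if `q(α) = 2` and `α = ζ + ξ` with `ζ, ξ` roots of unity, `⟨ζ,ξ⟩ = 0`. -/
theorem aux_orth {α ζ ξ : Qbar} (hq2 : qInner α α = 2) (hζ : IsRootOfUnity ζ)
    (hξ : IsRootOfUnity ξ) (hsum : α = ζ + ξ) : qInner ζ ξ = 0 := by
  obtain ⟨m, hm, hζm⟩ := hζ
  obtain ⟨k, hk, hξk⟩ := hξ
  have hζL : ζ ∈ Qbar.field2 ζ ξ := Qbar.mem_field2_left ζ ξ
  have hξL : ξ ∈ Qbar.field2 ζ ξ := Qbar.mem_field2_right ζ ξ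
  have hαL : α ∈ Qbar.field2 ζ ξ := hsum ▸ add_mem hζL hξL
  set L := Qbar.field2 ζ ξ
  set n : ℝ := (finrank ℚ L : ℝ) with hn
  have hnpos : (0 : ℝ) < n := by rw [hn]; exact Nat.cast_pos.mpr Module.finrank_pos
  have ha : (eSum L ⟨ζ, hζL⟩ ⟨ζ, hζL⟩).re = n :=
    eSum_self_rootOfUnity _ hm (subtype_pow_eq_one hζm hζL)
  have hb : (eSum L ⟨ξ, hξL⟩ ⟨ξ, hξL⟩).re = n :=
    eSum_self_rootOfUnity _ hk (subtype_pow_eq_one hξk hξL)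
  have hdec := eSum_decomp L hζL hξL hsum hαL
  rw [ha, hb] at hdec
  have hqα := qInner_ofReal L hαL hαL
  rw [hdec] at hqα
  rw [hqα] at hq2
  have h2 : ((2 : ℝ) : ℂ) = (2 : ℂ) := by norm_num
  rw [← h2] at hq2
  have hq2' := Complex.ofReal_inj.mp hq2
  set c := (eSum L ⟨ζ, hζL⟩ ⟨ξ, hξL⟩).re
  have hc : c = 0 := by
    have hmul := congrArg (fun t => n * t) hq2'
    rw [← mul_assoc, mul_inv_cancel₀ hnpos.ne', one_mul] at hmul
    linarith
  rw [qInner_ofReal L hζL hξL]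
  rw [show (eSum L ⟨ζ, hζL⟩ ⟨ξ, hξL⟩).re = c from rfl, hc]
  simp

/-- Uniqueness of the root-of-unity decomposition. -/
theorem aux_uniq {α ζ ξ ζ' ξ' : Qbar} (hα0 : α ≠ 0)
    (hζ : IsRootOfUnity ζ) (hξ : IsRootOfUnity ξ)
    (hζ' : IsRootOfUnity ζ') (hξ' : IsRootOfUnity ξ')
    (h1 : α = ζ + ξ) (h2 : α = ζ' + ξ') :
    (ζ' = ζ ∧ ξ' = ξ) ∨ (ζ' = ξ ∧ ξ' = ζ) := by
  have j : Qbar →ₐ[ℚ] ℂ := by haveI : Algebra.IsAlgebraic ℚ Qbar := ⟨fun x => (AlgebraicClosure.isAlgebraic ℚ).isAlgebraic x⟩; exact IsAlgClosed.lift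
  have hjinj : Function.Injective j := j.toRingHom.injective
  have hnorm : ∀ z : Qbar, IsRootOfUnity z → ‖j z‖ = 1 := by
    intro z hz
    obtain ⟨m, hm, hzm⟩ := hz
    have h1' : (j z) ^ m = 1 := by rw [← map_pow, hzm, map_one]
    have h2' : ‖j z‖ ^ m = 1 := by rw [← norm_pow, h1', norm_one]
    exact real_pow_eq_one (norm_nonneg _) hm h2'
  have hs : j ζ + j ξ = j ζ' + j ξ' := by
    rw [← map_add, ← map_add, ← h1, ← h2]
  have hne : j ζ + j ξ ≠ 0 := by
    rw [← map_add, ← h1]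
    intro h
    exact hα0 (hjinj (by rw [h, map_zero]))
  rcases complex_pair (hnorm ζ hζ) (hnorm ξ hξ) (hnorm ζ' hζ') (hnorm ξ' hξ') hs hne with
    ⟨ha, hb⟩ | ⟨ha, hb⟩
  · exact Or.inl ⟨hjinj ha, hjinj hb⟩
  · exact Or.inr ⟨hjinj ha, hjinj hb⟩

end QAux2
namespace QAux3

open Module QAux QAux2 IntermediateField

/-- Forward direction: a nontrivial decomposition of `α` with `q(α) = 2` consists of
roots of unity. -/
theorem aux_forward {α β γ : Qbar} (hq2 : qInner α α = 2)
    (hβZ : IsIntegral ℤ β) (hγZ : IsIntegral ℤ γ) (hsum : α = β + γ)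
    (hpos : 0 ≤ qInner β γ) (hβ0 : β ≠ 0) (hγ0 : γ ≠ 0) :
    IsRootOfUnity β ∧ IsRootOfUnity γ := by
  have hβL : β ∈ Qbar.field2 β γ := Qbar.mem_field2_left β γ
  have hγL : γ ∈ Qbar.field2 β γ := Qbar.mem_field2_right β γ
  have hαL : α ∈ Qbar.field2 β γ := hsum ▸ add_mem hβL hγL
  set L := Qbar.field2 β γ
  set n : ℝ := (finrank ℚ L : ℝ) with hn
  have hnpos : (0 : ℝ) < n := by rw [hn]; exact Nat.cast_pos.mpr Module.finrank_pos
  set a := (eSum L ⟨β, hβL⟩ ⟨β, hβL⟩).re with ha_def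
  set b := (eSum L ⟨γ, hγL⟩ ⟨γ, hγL⟩).re with hb_def
  set c := (eSum L ⟨β, hβL⟩ ⟨γ, hγL⟩).re with hc_def
  have ha : n ≤ a := eSum_self_lb _ (subtype_isIntegral hβZ hβL) (subtype_ne_zero hβ0 hβL)
  have hb : n ≤ b := eSum_self_lb _ (subtype_isIntegral hγZ hγL) (subtype_ne_zero hγ0 hγL)
  have hc : 0 ≤ c := by
    have hq := qInner_ofReal L hβL hγL
    rw [hq] at hpos
    have := Complex.zero_le_real.mp hpos
    by_contra hcneg
    push_neg at hcneg
    have : n⁻¹ * c < 0 := mul_neg_of_pos_of_neg (inv_pos.mpr hnpos) hcneg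
    linarith
  have hdec := eSum_decomp L hβL hγL hsum hαL
  have hqα := qInner_ofReal L hαL hαL
  rw [hdec] at hqα
  rw [hqα] at hq2
  have h2 : ((2 : ℝ) : ℂ) = (2 : ℂ) := by norm_num
  rw [← h2] at hq2
  have hq2' := Complex.ofReal_inj.mp hq2
  have hsum2 : a + b + 2 * c = 2 * n := by
    have hmul := congrArg (fun t => n * t) hq2'
    rw [← mul_assoc, mul_inv_cancel₀ hnpos.ne', one_mul] at hmul
    linarith
  have haeq : a = n := by linarith
  have hbeq : b = n := by linarith
  constructor
  · obtain ⟨m, hm, hpow⟩ := eSum_self_eq_rootOfUnity (⟨β, hβL⟩ : L)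
      (subtype_isIntegral hβZ hβL) (subtype_ne_zero hβ0 hβL) haeq
    refine ⟨m, hm, ?_⟩
    have := congrArg Subtype.val hpow
    push_cast at this
    exact this
  · obtain ⟨m, hm, hpow⟩ := eSum_self_eq_rootOfUnity (⟨γ, hγL⟩ : L)
      (subtype_isIntegral hγZ hγL) (subtype_ne_zero hγ0 hγL) hbeq
    refine ⟨m, hm, ?_⟩
    have := congrArg Subtype.val hpow
    push_cast at this
    exact this

/-- Degree bound: `[ℚ(α,ζ):ℚ] ≤ 2 [ℚ(α):ℚ]`. -/
theorem aux_degree {α ζ ξ : Qbar} (hα0 : α ≠ 0)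
    (hζ : IsRootOfUnity ζ) (hξ : IsRootOfUnity ξ) (hsum : α = ζ + ξ) :
    finrank ℚ (Qbar.field2 α ζ) ≤ 2 * finrank ℚ (Qbar.field1 α) := by
  classical
  haveI : CharZero (Qbar.field1 α) :=
    charZero_of_injective_algebraMap (algebraMap ℚ (Qbar.field1 α)).injective
  haveI : Algebra.IsAlgebraic (Qbar.field1 α) Qbar :=
    by haveI : Algebra.IsAlgebraic ℚ Qbar := ⟨fun x => (AlgebraicClosure.isAlgebraic ℚ).isAlgebraic x⟩; exact Algebra.IsAlgebraic.tower_top (K := ℚ) (Qbar.field1 α)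
  haveI hfdE : FiniteDimensional (Qbar.field1 α)
      (IntermediateField.adjoin (Qbar.field1 α) {ζ}) :=
    IntermediateField.finiteDimensional_adjoin fun x _ =>
      IsAlgebraic.isIntegral (Algebra.IsAlgebraic.isAlgebraic x)
  have hαF : α ∈ Qbar.field1 α := IntermediateField.mem_adjoin_simple_self ℚ α
  have hle : Qbar.field1 α ≤ Qbar.field2 α ζ :=
    IntermediateField.adjoin.mono ℚ {α} {α, ζ}
      (Set.singleton_subset_iff.mpr (Set.mem_insert _ _))
  have hres : (IntermediateField.adjoin (Qbar.field1 α) {ζ}).restrictScalars ℚ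
      = Qbar.field2 α ζ := by
    have h := IntermediateField.adjoin_adjoin_left (F := ℚ) (E := Qbar)
      (S := ({α} : Set Qbar)) (T := ({ζ} : Set Qbar))
    rw [Set.singleton_union] at h
    exact h
  have hext : IntermediateField.extendScalars hle
      = IntermediateField.adjoin (Qbar.field1 α) {ζ} := by
    apply IntermediateField.restrictScalars_injective ℚ
    exact hres.symm
  have hrank : finrank ℚ (Qbar.field1 α) *
      finrank (Qbar.field1 α) (IntermediateField.adjoin (Qbar.field1 α) {ζ})
      = finrank ℚ (Qbar.field2 α ζ) := by
    rw [← IntermediateField.finrank_bot_mul_relfinrank hle]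
    congr 1
    rw [IntermediateField.relfinrank_eq_finrank_of_le hle, hext]
  have hζE : ζ ∈ IntermediateField.adjoin (Qbar.field1 α) {ζ} :=
    IntermediateField.mem_adjoin_simple_self (Qbar.field1 α) ζ
  have hαE : α ∈ IntermediateField.adjoin (Qbar.field1 α) {ζ} := by
    have h := (IntermediateField.adjoin (Qbar.field1 α) {ζ}).algebraMap_mem
      (⟨α, hαF⟩ : Qbar.field1 α)
    exact h
  have hξE : ξ ∈ IntermediateField.adjoin (Qbar.field1 α) {ζ} := by
    have hξval : ξ = α - ζ := by rw [hsum]; ring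
    rw [hξval]
    exact sub_mem hαE hζE
  -- each F-embedding of E sends ζ to ζ or ξ
  have hkey : ∀ τ : IntermediateField.adjoin (Qbar.field1 α) {ζ} →ₐ[Qbar.field1 α] Qbar,
      τ ⟨ζ, hζE⟩ = ζ ∨ τ ⟨ζ, hζE⟩ = ξ := by
    intro τ
    obtain ⟨m, hm, hζm⟩ := hζ
    obtain ⟨k, hk, hξk⟩ := hξ
    have hτζ : IsRootOfUnity (τ ⟨ζ, hζE⟩) := by
      refine ⟨m, hm, ?_⟩
      rw [← map_pow]
      have hz : (⟨ζ, hζE⟩ : IntermediateField.adjoin (Qbar.field1 α) {ζ}) ^ m = 1 := by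
        apply Subtype.ext; push_cast; exact hζm
      rw [hz, map_one]
    have hτξ : IsRootOfUnity (τ ⟨ξ, hξE⟩) := by
      refine ⟨k, hk, ?_⟩
      rw [← map_pow]
      have hz : (⟨ξ, hξE⟩ : IntermediateField.adjoin (Qbar.field1 α) {ζ}) ^ k = 1 := by
        apply Subtype.ext; push_cast; exact hξk
      rw [hz, map_one]
    have hfix : τ ⟨α, hαE⟩ = α := by
      have h0 : (⟨α, hαE⟩ : IntermediateField.adjoin (Qbar.field1 α) {ζ})
          = algebraMap (Qbar.field1 α) _ (⟨α, hαF⟩ : Qbar.field1 α) := rfl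
      rw [h0, τ.commutes]
      rfl
    have hsplit : (⟨α, hαE⟩ : IntermediateField.adjoin (Qbar.field1 α) {ζ})
        = ⟨ζ, hζE⟩ + ⟨ξ, hξE⟩ := by
      apply Subtype.ext; push_cast; exact hsum
    have hsumτ : α = τ ⟨ζ, hζE⟩ + τ ⟨ξ, hξE⟩ := by
      calc α = τ ⟨α, hαE⟩ := hfix.symm
      _ = τ ⟨ζ, hζE⟩ + τ ⟨ξ, hξE⟩ := by rw [hsplit, map_add]
    rcases aux_uniq hα0 ⟨m, hm, hζm⟩ ⟨k, hk, hξk⟩ hτζ hτξ hsum hsumτ with ⟨h, _⟩ | ⟨h, _⟩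
    · exact Or.inl h
    · exact Or.inr h
  -- injectivity of evaluation at ζ
  have hinj : Function.Injective
      (fun τ : IntermediateField.adjoin (Qbar.field1 α) {ζ} →ₐ[Qbar.field1 α] Qbar =>
        τ ⟨ζ, hζE⟩) := by
    intro τ1 τ2 h
    apply IntermediateField.adjoin_algHom_ext
    intro x hx
    rw [Set.mem_singleton_iff] at hx
    subst hx
    exact h
  -- cardinality bound
  have hsep : finrank (Qbar.field1 α) (IntermediateField.adjoin (Qbar.field1 α) {ζ})
      = Nat.card (IntermediateField.adjoin (Qbar.field1 α) {ζ} →ₐ[Qbar.field1 α] Qbar) := by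
    rw [← Field.finSepDegree_eq_finrank_of_isSeparable,
      Field.finSepDegree_eq_of_isAlgClosed (Qbar.field1 α)
        (IntermediateField.adjoin (Qbar.field1 α) {ζ}) Qbar]
  have hcard : finrank (Qbar.field1 α) (IntermediateField.adjoin (Qbar.field1 α) {ζ}) ≤ 2 := by
    rw [hsep, Nat.card_eq_fintype_card]
    have hmap : ∀ τ : IntermediateField.adjoin (Qbar.field1 α) {ζ} →ₐ[Qbar.field1 α] Qbar,
        (τ ⟨ζ, hζE⟩) ∈ ({ζ, ξ} : Finset Qbar) := by
      intro τ
      rcases hkey τ with h | h <;> simp [h]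
    have hinj2 : Function.Injective
        (fun τ : IntermediateField.adjoin (Qbar.field1 α) {ζ} →ₐ[Qbar.field1 α] Qbar =>
          (⟨τ ⟨ζ, hζE⟩, hmap τ⟩ : ({ζ, ξ} : Finset Qbar))) := by
      intro τ1 τ2 h
      apply hinj
      exact congrArg Subtype.val h
    have hle2 := Fintype.card_le_of_injective _ hinj2
    have h1 : Fintype.card ({ζ, ξ} : Finset Qbar) = ({ζ, ξ} : Finset Qbar).card :=
      Fintype.card_coe _
    have h2 : ({ζ, ξ} : Finset Qbar).card ≤ 2 :=
      (Finset.card_insert_le _ _).trans (by simp)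
    omega
  rw [← hrank, mul_comm (finrank ℚ (Qbar.field1 α))]
  exact Nat.mul_le_mul hcard (le_refl _)
end QAux3
/-- (i) An algebraic integer `α` with `0 < q(α) < 2` is indecomposable.
(ii) If `q(α) = 2`, then `α` has a nontrivial decomposition iff `α` is a sum of two roots
of unity; such roots of unity are orthogonal, unique up to ordering, and of degree at most
`2` over `ℚ(α)` (expressed as `[ℚ(α,ζ):ℚ] ≤ 2·[ℚ(α):ℚ]`). -/
theorem q_lt_two_indecomposable_and_q_eq_two :
    (∀ α : Qbar, α ∈ Zbar → 0 < qInner α α → qInner α α < 2 → IsIndecomposable α) ∧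
    (∀ α : Qbar, α ∈ Zbar → qInner α α = 2 →
      ((∃ β γ : Qbar, IsDecompositionOf α β γ ∧ β ≠ 0 ∧ γ ≠ 0) ↔
        ∃ ζ ξ : Qbar, IsRootOfUnity ζ ∧ IsRootOfUnity ξ ∧ α = ζ + ξ) ∧
      (∀ ζ ξ : Qbar, IsRootOfUnity ζ → IsRootOfUnity ξ → α = ζ + ξ →
        qInner ζ ξ = 0 ∧
        (∀ ζ' ξ' : Qbar, IsRootOfUnity ζ' → IsRootOfUnity ξ' → α = ζ' + ξ' →
          (ζ' = ζ ∧ ξ' = ξ) ∨ (ζ' = ξ ∧ ξ' = ζ)) ∧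
        Module.finrank ℚ (Qbar.field2 α ζ) ≤ 2 * Module.finrank ℚ (Qbar.field1 α))) := by
  constructor
  · -- part (i)
    intro α hαZ hq0 hq2
    have hα0 : α ≠ 0 := by
      rintro rfl
      rw [QAux2.qInner_zero] at hq0
      exact lt_irrefl 0 hq0
    refine ⟨hαZ, hα0, ?_⟩
    rintro β γ ⟨hβZ, hγZ, hsum, hpos⟩
    by_contra hcon
    push_neg at hcon
    obtain ⟨hβ0, hγ0⟩ := hcon
    have hβZ' : IsIntegral ℤ β := hβZ
    have hγZ' : IsIntegral ℤ γ := hγZ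
    have hβL : β ∈ Qbar.field2 β γ := Qbar.mem_field2_left β γ
    have hγL : γ ∈ Qbar.field2 β γ := Qbar.mem_field2_right β γ
    have hαL : α ∈ Qbar.field2 β γ := hsum ▸ add_mem hβL hγL
    set L := Qbar.field2 β γ
    set n : ℝ := (Module.finrank ℚ L : ℝ) with hn
    have hnpos : (0 : ℝ) < n := by rw [hn]; exact Nat.cast_pos.mpr Module.finrank_pos
    set a := (QAux.eSum L ⟨β, hβL⟩ ⟨β, hβL⟩).re with ha_def
    set b := (QAux.eSum L ⟨γ, hγL⟩ ⟨γ, hγL⟩).re with hb_def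
    set c := (QAux.eSum L ⟨β, hβL⟩ ⟨γ, hγL⟩).re with hc_def
    have ha : n ≤ a := QAux.eSum_self_lb _ (QAux2.subtype_isIntegral hβZ' hβL)
      (QAux2.subtype_ne_zero hβ0 hβL)
    have hb : n ≤ b := QAux.eSum_self_lb _ (QAux2.subtype_isIntegral hγZ' hγL)
      (QAux2.subtype_ne_zero hγ0 hγL)
    have hc : 0 ≤ c := by
      have hq := QAux2.qInner_ofReal L hβL hγL
      rw [hq] at hpos
      have h0 := Complex.zero_le_real.mp hpos
      by_contra hcneg
      push_neg at hcneg
      have : n⁻¹ * c < 0 := mul_neg_of_pos_of_neg (inv_pos.mpr hnpos) hcneg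
      linarith
    have hdec := QAux2.eSum_decomp L hβL hγL hsum hαL
    have hqα := QAux2.qInner_ofReal L hαL hαL
    rw [hdec] at hqα
    rw [hqα] at hq2
    have h2 : ((2 : ℝ) : ℂ) = (2 : ℂ) := by norm_num
    rw [← h2] at hq2
    have hq2' := Complex.real_lt_real.mp hq2
    have hlt : a + b + 2 * c < 2 * n := by
      have hmul := mul_lt_mul_of_pos_left hq2' hnpos
      rw [← mul_assoc, mul_inv_cancel₀ hnpos.ne', one_mul] at hmul
      linarith
    linarith
  · -- part (ii)
    intro α hαZ hq2
    have hα0 : α ≠ 0 := by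
      rintro rfl
      rw [QAux2.qInner_zero] at hq2
      exact absurd hq2 (by norm_num)
    refine ⟨?_, ?_⟩
    · constructor
      · rintro ⟨β, γ, ⟨hβZ, hγZ, hsum, hpos⟩, hβ0, hγ0⟩
        obtain ⟨h1, h2⟩ := QAux3.aux_forward hq2 hβZ hγZ hsum hpos hβ0 hγ0
        exact ⟨β, γ, h1, h2, hsum⟩
      · rintro ⟨ζ, ξ, hζ, hξ, hsum⟩
        refine ⟨ζ, ξ, ⟨QAux2.rootOfUnity_isIntegral hζ, QAux2.rootOfUnity_isIntegral hξ,
          hsum, ?_⟩, QAux2.rootOfUnity_ne_zero hζ, QAux2.rootOfUnity_ne_zero hξ⟩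
        rw [QAux2.aux_orth hq2 hζ hξ hsum]
    · intro ζ ξ hζ hξ hsum
      refine ⟨QAux2.aux_orth hq2 hζ hξ hsum, ?_, QAux3.aux_degree hα0 hζ hξ hsum⟩
      intro ζ' ξ' hζ' hξ' hsum'
      exact QAux2.aux_uniq hα0 hζ hξ hζ' hξ' hsum hsum'

end
end

section
/- (Szegő) Let α ∈ ℚ̄ and let r ∈ ℝ with r > 1. Then there exist infinitely many algebraic integers β ∈ Z̄ such that |α − β|_∞ < r. -/
open scoped ComplexConjugate ComplexOrder

noncomputable section

/-- The max-norm `|γ|_∞ = max_{σ : ℚ(γ) → ℂ} |σ(γ)|`. -/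
def maxAbs (γ : Qbar) : ℝ :=
  ⨆ σ : Qbar.field2 γ γ →ₐ[ℚ] ℂ, ‖σ ⟨γ, Qbar.mem_field2_left γ γ⟩‖

namespace SzegoAux

open Polynomial Finset

/-- Any `ℚ`-embedding of an intermediate field of `Qbar` extends to `Qbar`. -/
lemma exists_extension (L : IntermediateField ℚ Qbar) (σ : L →ₐ[ℚ] ℂ) :
    ∃ τ : Qbar →ₐ[ℚ] ℂ, ∀ x : L, τ x = σ x := by
  haveI : Algebra.IsAlgebraic ℚ Qbar := AlgebraicClosure.isAlgebraic ℚ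
  have : Algebra.IsAlgebraic L Qbar := Algebra.IsAlgebraic.tower_top (K := ℚ) L
  obtain ⟨τ, hτ⟩ := IsAlgClosed.surjective_restrictDomain_of_isAlgebraic
    (K := ℚ) (L := L) (E := Qbar) (M := ℂ) σ
  exact ⟨τ, fun x => by rw [← hτ]; rfl⟩

lemma nonempty_embedding (L : IntermediateField ℚ Qbar) [FiniteDimensional ℚ L] :
    Nonempty (L →ₐ[ℚ] ℂ) := by
  have : Algebra.IsAlgebraic ℚ L := Algebra.IsAlgebraic.of_finite ℚ L
  exact ⟨IsAlgClosed.lift⟩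

lemma int_smul_integral {L : IntermediateField ℚ Qbar} (z : ℤ) {x : L}
    (h : IsIntegral ℤ x) : IsIntegral ℤ ((z : ℚ) • x) := by
  have hz : (z : ℚ) • x = algebraMap ℤ L z * x := by
    rw [Algebra.smul_def]
    congr 1
  rw [hz]
  exact isIntegral_algebraMap.mul h

lemma exists_int_smul_integral {L : IntermediateField ℚ Qbar} [FiniteDimensional ℚ L]
    (x : L) : ∃ d : ℚ, d ≠ 0 ∧ IsIntegral ℤ (d • x) := by
  have hx : IsAlgebraic ℚ x := Algebra.IsAlgebraic.isAlgebraic x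
  have hx' : IsAlgebraic ℤ x := (IsFractionRing.isAlgebraic_iff ℤ ℚ L).mpr hx
  obtain ⟨d, hd, hyd⟩ := hx'.exists_integral_multiple
  refine ⟨(d : ℚ), by exact_mod_cast hd, ?_⟩
  have : (d : ℚ) • x = d • x := by
    rw [Algebra.smul_def, map_intCast, zsmul_eq_mul]
  rw [this]
  exact hyd

/-- There is a positive integer `q` such that `q • x` is an algebraic integer. -/
lemma exists_nat_smul_integral {L : IntermediateField ℚ Qbar} [FiniteDimensional ℚ L]
    (x : L) : ∃ q : ℕ, 0 < q ∧ IsIntegral ℤ (((q : ℕ) : ℚ) • x) := by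
  obtain ⟨d, hd0, hdint⟩ := exists_int_smul_integral x
  refine ⟨d.num.natAbs, Int.natAbs_pos.mpr (Rat.num_ne_zero.mpr hd0), ?_⟩
  have hden0 : ((d.den : ℚ)) ≠ 0 := by exact_mod_cast d.den_nz
  have hdd : ((d.num : ℤ) : ℚ) = d * (d.den : ℚ) := by
    have h := Rat.num_div_den d
    rw [div_eq_iff hden0] at h
    exact h
  have hnum : IsIntegral ℤ (((d.num : ℤ) : ℚ) • x) := by
    have hden : ((d.num : ℤ) : ℚ) • x = (((d.den : ℕ) : ℤ) : ℚ) • (d • x) := by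
      rw [smul_smul, hdd]
      push_cast
      rw [mul_comm]
    rw [hden]
    exact int_smul_integral _ hdint
  have habs : ((d.num.natAbs : ℕ) : ℚ) = |((d.num : ℤ) : ℚ)| := by
    rw [← Int.cast_natCast, Int.natCast_natAbs, Int.cast_abs]
  rw [habs]
  rcases abs_choice (((d.num : ℤ) : ℚ)) with hch | hch <;> rw [hch]
  · exact hnum
  · rw [neg_smul]; exact hnum.neg

/-- A uniform rounding constant for an intermediate field. -/
lemma exists_rounding (L : IntermediateField ℚ Qbar) [FiniteDimensional ℚ L] :
    ∃ C : ℝ, 0 ≤ C ∧ ∀ ξ : L, ∃ ω : L, IsIntegral ℤ ω ∧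
      ∀ σ : L →ₐ[ℚ] ℂ, ‖σ (ξ - ω)‖ ≤ C := by
  classical
  haveI : Nonempty (L →ₐ[ℚ] ℂ) := nonempty_embedding L
  -- a ℚ-basis of L consisting of algebraic integers
  obtain ⟨b, hb⟩ : ∃ b : Module.Basis (Fin (Module.finrank ℚ L)) ℚ L, ∀ i, IsIntegral ℤ (b i) := by
    set b₀ := Module.finBasis ℚ L with hb₀
    have h : ∀ i, ∃ u : ℚˣ, IsIntegral ℤ ((u : ℚ) • b₀ i) := by
      intro i
      obtain ⟨d, hd0, hdi⟩ := exists_int_smul_integral (b₀ i)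
      exact ⟨Units.mk0 d hd0, hdi⟩
    choose u hu using h
    refine ⟨b₀.unitsSMul u, fun i => ?_⟩
    rw [Module.Basis.unitsSMul_apply]
    exact hu i
  set M : Fin (Module.finrank ℚ L) → ℝ := fun i =>
    Finset.univ.sup' Finset.univ_nonempty (fun σ : L →ₐ[ℚ] ℂ => ‖σ (b i)‖) with hM
  have hMle : ∀ i (σ : L →ₐ[ℚ] ℂ), ‖σ (b i)‖ ≤ M i := fun i σ =>
    Finset.le_sup' (fun σ : L →ₐ[ℚ] ℂ => ‖σ (b i)‖) (Finset.mem_univ σ)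
  have hM0 : ∀ i, 0 ≤ M i := fun i =>
    le_trans (norm_nonneg _) (hMle i (Classical.arbitrary _))
  refine ⟨∑ i, M i, Finset.sum_nonneg fun i _ => hM0 i, ?_⟩
  intro ξ
  refine ⟨∑ i, ((round (b.repr ξ i) : ℤ) : ℚ) • b i, ?_, ?_⟩
  · exact IsIntegral.sum _ fun i _ => int_smul_integral _ (hb i)
  · intro σ
    have hrepr : ξ - ∑ i, ((round (b.repr ξ i) : ℤ) : ℚ) • b i
        = ∑ i, ((b.repr ξ i - (round (b.repr ξ i) : ℤ)) : ℚ) • b i := by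
      have h1 : (∑ i, (b.repr ξ i) • b i) - ∑ i, ((round (b.repr ξ i) : ℤ) : ℚ) • b i
          = ∑ i, ((b.repr ξ i - (round (b.repr ξ i) : ℤ)) : ℚ) • b i := by
        rw [← Finset.sum_sub_distrib]
        exact Finset.sum_congr rfl fun i _ => by rw [sub_smul]
      rw [b.sum_repr ξ] at h1
      exact h1
    rw [hrepr, map_sum]
    refine le_trans (norm_sum_le _ _) (Finset.sum_le_sum fun i _ => ?_)
    rw [Algebra.smul_def, map_mul, AlgHom.commutes, norm_mul]
    have h1 : ‖(algebraMap ℚ ℂ) (b.repr ξ i - (round (b.repr ξ i) : ℤ))‖ ≤ 1 := by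
      rw [eq_ratCast, Complex.norm_ratCast, ← Rat.cast_abs]
      have h2 : |b.repr ξ i - ((round (b.repr ξ i) : ℤ) : ℚ)| ≤ 1/2 := abs_sub_round _
      have h3 := (Rat.cast_le (K := ℝ)).mpr h2
      push_cast at h3 ⊢
      linarith
    calc ‖(algebraMap ℚ ℂ) (b.repr ξ i - (round (b.repr ξ i) : ℤ))‖
          * ‖σ (b i)‖
        ≤ 1 * ‖σ (b i)‖ := mul_le_mul_of_nonneg_right h1 (norm_nonneg _)
      _ = ‖σ (b i)‖ := one_mul _
      _ ≤ M i := hMle i σ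

end SzegoAux

namespace SzegoAux

open Polynomial Finset

/-- The digit-reduction lemma: any polynomial of degree `< n` can be corrected by a
combination of powers `(X - C a)^k`, `k < n`, with uniformly bounded coefficients, so that
all coefficients become algebraic integers. -/
lemma digits {L : IntermediateField ℚ Qbar} (a : L) {C : ℝ} (hC0 : 0 ≤ C)
    (hC : ∀ ξ : L, ∃ ω : L, IsIntegral ℤ ω ∧ ∀ σ : L →ₐ[ℚ] ℂ, ‖σ (ξ - ω)‖ ≤ C) :
    ∀ (n : ℕ) (P : L[X]), P.degree < n →
      ∃ c : ℕ → L, (∀ k (σ : L →ₐ[ℚ] ℂ), ‖σ (c k)‖ ≤ C) ∧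
        ∀ j, IsIntegral ℤ
          ((P + ∑ k ∈ range n, Polynomial.C (c k) * (X - Polynomial.C a) ^ k).coeff j) := by
  intro n
  induction n with
  | zero =>
    intro P hP
    have hP0 : P = 0 := by
      rw [← Polynomial.degree_eq_bot]
      exact Nat.WithBot.lt_zero_iff.mp (by exact_mod_cast hP)
    refine ⟨0, fun k σ => by simpa using hC0, fun j => ?_⟩
    simp only [hP0, Finset.range_zero, Finset.sum_empty, add_zero, Polynomial.coeff_zero]
    exact isIntegral_zero
  | succ n ih =>
    intro P hP
    obtain ⟨ω, hω, hbd⟩ := hC (P.coeff n)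
    set cn : L := ω - P.coeff n with hcn
    have hgn : ((X - Polynomial.C a) ^ n).degree = (n : WithBot ℕ) := by
      rw [degree_pow, degree_X_sub_C]
      simp
    have hgnc : ((X - Polynomial.C a) ^ n).coeff n = 1 := by
      have hmn : ((X - Polynomial.C a) ^ n).natDegree = n := by
        rw [natDegree_pow, natDegree_X_sub_C, mul_one]
      have := ((monic_X_sub_C a).pow n).coeff_natDegree
      rwa [hmn] at this
    set P' : L[X] := P + Polynomial.C cn * (X - Polynomial.C a) ^ n
      - Polynomial.C ω * X ^ n with hP'
    have hP'deg : P'.degree < n := by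
      rw [Polynomial.degree_lt_iff_coeff_zero]
      intro j hj
      have hjn : n ≤ j := by exact_mod_cast hj
      have hPj : ∀ m : ℕ, n < m → P.coeff m = 0 := fun m hm =>
        Polynomial.coeff_eq_zero_of_degree_lt (lt_of_lt_of_le hP (by exact_mod_cast hm))
      rcases eq_or_lt_of_le hjn with he | hlt
      · subst he
        simp only [P', Polynomial.coeff_sub, Polynomial.coeff_add, Polynomial.coeff_C_mul,
          Polynomial.coeff_X_pow, hgnc, hcn]
        simp only [if_true, ite_true, eq_self_iff_true, if_pos, mul_one]
        ring
      · have hne : ¬ j = n := by omega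
        simp only [P', Polynomial.coeff_sub, Polynomial.coeff_add, Polynomial.coeff_C_mul,
          Polynomial.coeff_X_pow]
        rw [if_neg hne, hPj j hlt,
          Polynomial.coeff_eq_zero_of_degree_lt (by rw [hgn]; exact_mod_cast hlt)]
        ring
    obtain ⟨c', hc'bd, hc'int⟩ := ih P' hP'deg
    refine ⟨fun k => if k = n then cn else c' k, ?_, ?_⟩
    · intro k σ
      by_cases hk : k = n
      · simp only [if_pos hk]
        have := hbd σ
        have hneg : cn = -(P.coeff n - ω) := by rw [hcn]; ring
        rw [hneg, map_neg, norm_neg]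
        exact this
      · simp only [if_neg hk]; exact hc'bd k σ
    · intro j
      have hlast : (fun k => if k = n then cn else c' k) n = cn := by simp
      have hsum_eq : ∑ k ∈ range n,
            Polynomial.C ((fun k => if k = n then cn else c' k) k) * (X - Polynomial.C a) ^ k
          = ∑ k ∈ range n, Polynomial.C (c' k) * (X - Polynomial.C a) ^ k :=
        Finset.sum_congr rfl fun k hk => by
          simp only [if_neg (Nat.ne_of_lt (Finset.mem_range.mp hk))]
      have key : P + ∑ k ∈ range (n+1),
            Polynomial.C ((fun k => if k = n then cn else c' k) k) * (X - Polynomial.C a) ^ k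
          = (P' + ∑ k ∈ range n, Polynomial.C (c' k) * (X - Polynomial.C a) ^ k)
            + Polynomial.C ω * X ^ n := by
        rw [Finset.sum_range_succ, hsum_eq, hlast, hP']
        ring
      rw [key, Polynomial.coeff_add]
      refine (hc'int j).add ?_
      rw [Polynomial.coeff_C_mul, Polynomial.coeff_X_pow]
      split_ifs
      · simpa using hω
      · simpa using isIntegral_zero

/-- Real-number estimate: the contradiction engine. -/
lemma real_estimate {C₁ r' : ℝ} (hr' : 1 < r') (hC : 0 ≤ C₁) {J n : ℕ} (hn : 1 ≤ n)
    (hJ : C₁ < r' ^ J * (r' - 1)) {w : ℝ} (hw0 : 0 ≤ w)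
    (hineq : w ^ (n + J) ≤ C₁ * ∑ k ∈ Finset.range n, w ^ k) : w < r' := by
  by_contra hcon
  push_neg at hcon
  have hw1 : 1 < w := lt_of_lt_of_le hr' hcon
  have hsum : (∑ k ∈ Finset.range n, w ^ k) * (w - 1) = w ^ n - 1 := geom_sum_mul w n
  have hwn : (0:ℝ) < w ^ n := pow_pos (by linarith) n
  have h1 : w ^ (n + J) * (w - 1) ≤ C₁ * (w ^ n - 1) := by
    calc w ^ (n + J) * (w - 1) ≤ (C₁ * ∑ k ∈ Finset.range n, w ^ k) * (w - 1) := by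
          apply mul_le_mul_of_nonneg_right hineq (by linarith)
      _ = C₁ * (w ^ n - 1) := by rw [mul_assoc, hsum]
  have h2 : w ^ (n + J) * (w - 1) ≤ C₁ * w ^ n := by
    refine le_trans h1 ?_
    have : w ^ n - 1 ≤ w ^ n := by linarith
    exact mul_le_mul_of_nonneg_left this hC
  rw [pow_add] at h2
  have h2' : (w ^ J * (w - 1)) * w ^ n ≤ C₁ * w ^ n := by nlinarith [h2]
  have h3 : w ^ J * (w - 1) ≤ C₁ := le_of_mul_le_mul_right h2' hwn
  have h4 : r' ^ J * (r' - 1) ≤ w ^ J * (w - 1) := by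
    apply mul_le_mul
    · exact pow_le_pow_left₀ (by linarith) hcon J
    · linarith
    · linarith
    · positivity
  linarith

end SzegoAux


namespace SzegoAux

open Polynomial Finset

lemma natCast_isIntegral {R : Type*} [CommRing R] (k : ℕ) : IsIntegral ℤ ((k : ℕ) : R) := by
  have h : ((k : ℕ) : R) = algebraMap ℤ R (k : ℤ) := by push_cast; simp
  rw [h]
  exact isIntegral_algebraMap

set_option maxHeartbeats 1000000 in
/-- The key construction: given `α`, a radius `r' > 1` and a finite set `T`, there is an
algebraic integer `β ∉ T` with `|τ α - τ β| < r'` for every embedding `τ : Qbar → ℂ`. -/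
theorem key (α : Qbar) (r' : ℝ) (hr' : 1 < r') (T : Finset Qbar) :
    ∃ β : Qbar, IsIntegral ℤ β ∧ β ∉ T ∧
      ∀ τ : Qbar →ₐ[ℚ] ℂ, ‖τ α - τ β‖ < r' := by
  classical
  set L : IntermediateField ℚ Qbar := Qbar.field2 α α with hLdef
  set a : L := ⟨α, Qbar.mem_field2_left α α⟩ with hadef
  -- the denominator q
  obtain ⟨q, hqpos, hqa⟩ := exists_nat_smul_integral a
  have hqaL : IsIntegral ℤ (((q : ℕ) : L) * a) := by
    have h : ((q : ℕ) : ℚ) • a = ((q : ℕ) : L) * a := by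
      rw [Algebra.smul_def, map_natCast]
    rwa [h] at hqa
  -- the rounding constant
  obtain ⟨C, hC0, hround⟩ := exists_rounding L
  set C₁ : ℝ := C + T.card + 1 with hC₁def
  have hC₁0 : 0 ≤ C₁ := by
    have : (0:ℝ) ≤ T.card := Nat.cast_nonneg _
    rw [hC₁def]; linarith
  -- choice of J
  obtain ⟨J, hJ⟩ : ∃ J : ℕ, C₁ < r' ^ J * (r' - 1) := by
    obtain ⟨J, hJ⟩ := pow_unbounded_of_one_lt (C₁ / (r' - 1)) hr'
    refine ⟨J, ?_⟩
    rwa [div_lt_iff₀ (by linarith)] at hJ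
  -- choice of the degree m
  set m : ℕ := q ^ J * (J + 1).factorial with hmdef
  have hqJpos : 0 < q ^ J := pow_pos hqpos J
  have hJm : J + 1 ≤ m := by
    calc J + 1 ≤ (J + 1).factorial := Nat.self_le_factorial _
      _ = 1 * (J + 1).factorial := (one_mul _).symm
      _ ≤ q ^ J * (J + 1).factorial := Nat.mul_le_mul_right _ hqJpos
  set n : ℕ := m - J with hndef
  have hnm : n + J = m := Nat.sub_add_cancel (by omega)
  have hn1 : 1 ≤ n := by omega
  -- binomial divisibility
  have hdvd : ∀ j : ℕ, 1 ≤ j → j ≤ J → q ^ j ∣ m.choose j := by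
    intro j hj1 hjJ
    have hdvdm : q ^ j * j ∣ m := by
      apply mul_dvd_mul
      · exact pow_dvd_pow q hjJ
      · exact Nat.dvd_factorial (by omega) (by omega)
    obtain ⟨t, ht⟩ := hdvdm
    have hid := Nat.add_one_mul_choose_eq (m - 1) (j - 1)
    rw [Nat.sub_add_cancel (by omega : 1 ≤ m), Nat.sub_add_cancel (by omega : 1 ≤ j)] at hid
    -- hid : m * (m-1).choose (j-1) = m.choose j * j
    refine ⟨t * (m - 1).choose (j - 1), ?_⟩
    have hj0 : 0 < j := hj1
    have hfin : m.choose j * j = q ^ j * (t * (m - 1).choose (j - 1)) * j := by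
      rw [← hid, ht]; ring
    exact Nat.eq_of_mul_eq_mul_right hj0 hfin
  -- base polynomial and expansion
  set g : L[X] := X - Polynomial.C a with hgdef
  have hexp : g ^ m = ∑ k ∈ range (m + 1),
      Polynomial.C ((-a) ^ (m - k) * ((m.choose k : ℕ) : L)) * X ^ k := by
    rw [hgdef, sub_eq_add_neg, ← Polynomial.C_neg, add_pow]
    refine Finset.sum_congr rfl fun k _ => ?_
    rw [← Polynomial.C_pow, map_mul (Polynomial.C), Polynomial.C_eq_natCast]
    ring
  have hsplit : g ^ m
      = (∑ k ∈ range n, Polynomial.C ((-a) ^ (m - k) * ((m.choose k : ℕ) : L)) * X ^ k)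
      + ∑ k ∈ Finset.Ico n (m + 1),
          Polynomial.C ((-a) ^ (m - k) * ((m.choose k : ℕ) : L)) * X ^ k := by
    rw [hexp, Finset.range_eq_Ico,
      ← Finset.sum_Ico_consecutive _ (Nat.zero_le n) (by omega : n ≤ m + 1), Finset.range_eq_Ico]
  -- the high part has integral coefficients
  have hPhiInt : ∀ j, IsIntegral ℤ ((∑ k ∈ Finset.Ico n (m + 1),
      Polynomial.C ((-a) ^ (m - k) * ((m.choose k : ℕ) : L)) * X ^ k).coeff j) := by
    intro j
    rw [Polynomial.finset_sum_coeff]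
    refine IsIntegral.sum _ fun k hk => ?_
    rw [Polynomial.coeff_C_mul, Polynomial.coeff_X_pow]
    by_cases hjk : j = k
    · rw [if_pos hjk, mul_one]
      obtain ⟨hk1, hk2⟩ := Finset.mem_Ico.mp hk
      by_cases hi0 : m - k = 0
      · rw [hi0, pow_zero, one_mul]
        exact natCast_isIntegral _
      · obtain ⟨D, hD⟩ := hdvd (m - k) (by omega) (by omega)
        have hchoose : m.choose k = m.choose (m - k) := (Nat.choose_symm (by omega)).symm
        have hval : ((-a) ^ (m - k) * ((m.choose k : ℕ) : L))
            = (-(((q : ℕ) : L) * a)) ^ (m - k) * ((D : ℕ) : L) := by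
          rw [hchoose, hD]
          push_cast
          ring
        rw [hval]
        exact ((hqaL.neg).pow _).mul (natCast_isIntegral _)
    · rw [if_neg hjk, mul_zero]
      exact isIntegral_zero
  -- the low part has degree < n
  have hPlodeg : (∑ k ∈ range n,
      Polynomial.C ((-a) ^ (m - k) * ((m.choose k : ℕ) : L)) * X ^ k).degree
        < (n : WithBot ℕ) := by
    rw [Polynomial.degree_lt_iff_coeff_zero]
    intro j hj
    have hjn : n ≤ j := by exact_mod_cast hj
    rw [Polynomial.finset_sum_coeff]
    refine Finset.sum_eq_zero fun k hk => ?_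
    have hkn : k < n := Finset.mem_range.mp hk
    rw [Polynomial.coeff_C_mul, Polynomial.coeff_X_pow, if_neg (by omega), mul_zero]
  -- digit correction
  obtain ⟨c, hcbd, hcint⟩ := digits a hC0 hround n _ hPlodeg
  set E : L[X] := ∑ k ∈ range n, Polynomial.C (c k) * g ^ k with hEdef
  set H0 : L[X] := g ^ m + E with hH0def
  have hH0int : ∀ j, IsIntegral ℤ (H0.coeff j) := by
    intro j
    have hre : H0 = ((∑ k ∈ range n,
          Polynomial.C ((-a) ^ (m - k) * ((m.choose k : ℕ) : L)) * X ^ k) + E)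
        + ∑ k ∈ Finset.Ico n (m + 1),
            Polynomial.C ((-a) ^ (m - k) * ((m.choose k : ℕ) : L)) * X ^ k := by
      rw [hH0def, hsplit]; ring
    rw [hre, Polynomial.coeff_add]
    exact (hcint j).add (hPhiInt j)
  -- degrees
  have hgkdeg : ∀ k : ℕ, (g ^ k).degree = (k : WithBot ℕ) := by
    intro k
    rw [hgdef, degree_pow, degree_X_sub_C]
    simp
  have hEdeg : E.degree < (m : WithBot ℕ) := by
    rw [Polynomial.degree_lt_iff_coeff_zero]
    intro j hj
    have hjm : m ≤ j := by exact_mod_cast hj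
    rw [hEdef, Polynomial.finset_sum_coeff]
    refine Finset.sum_eq_zero fun k hk => ?_
    have hkn : k < n := Finset.mem_range.mp hk
    rw [Polynomial.coeff_C_mul,
      Polynomial.coeff_eq_zero_of_degree_lt (by rw [hgkdeg k]; exact_mod_cast by omega),
      mul_zero]
  have hgm_monic : (g ^ m).Monic := by rw [hgdef]; exact (monic_X_sub_C a).pow m
  have hgmdeg : (g ^ m).degree = (m : WithBot ℕ) := hgkdeg m
  have hH0monic : H0.Monic := by
    rw [hH0def]
    exact hgm_monic.add_of_left (by rw [hgmdeg]; exact hEdeg)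
  have hH0deg : H0.degree = (m : WithBot ℕ) := by
    rw [hH0def, Polynomial.degree_add_eq_left_of_degree_lt (by rw [hgmdeg]; exact hEdeg), hgmdeg]
  -- over Qbar
  set B : Qbar[X] := H0.map (algebraMap L Qbar) with hBdef
  have hBdeg : B.degree = (m : WithBot ℕ) := by
    rw [hBdef, Polynomial.degree_map_eq_of_injective (algebraMap L Qbar).injective, hH0deg]
  -- pigeonhole choice of the integer shift
  obtain ⟨s, hsle, hsT⟩ : ∃ s : ℕ, s ≤ T.card ∧
      ∀ x ∈ T, (B + Polynomial.C ((s : ℕ) : Qbar)).eval x ≠ 0 := by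
    by_contra hcon
    push_neg at hcon
    have hcon' : ∀ s : Fin (T.card + 1), ∃ x, x ∈ T ∧
        (B + Polynomial.C (((s : ℕ) : ℕ) : Qbar)).eval x = 0 := by
      intro s
      obtain ⟨x, hx, h0⟩ := hcon s (by omega)
      exact ⟨x, hx, h0⟩
    choose f hfT hf0 using hcon'
    have hinj : Function.Injective f := by
      intro s1 s2 heq
      have h1 := hf0 s1
      have h2 := hf0 s2
      rw [heq] at h1
      rw [Polynomial.eval_add, Polynomial.eval_C] at h1 h2
      have hcast : (((s1 : ℕ) : ℕ) : Qbar) = (((s2 : ℕ) : ℕ) : Qbar) := by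
        linear_combination h1 - h2
      have : (s1 : ℕ) = (s2 : ℕ) := Nat.cast_injective hcast
      exact Fin.ext this
    have hle := Finset.card_le_card_of_injOn (s := Finset.univ) (t := T) f
      (fun a _ => hfT a) hinj.injOn
    simp only [Finset.card_univ, Fintype.card_fin] at hle
    omega
  set HQ : Qbar[X] := B + Polynomial.C ((s : ℕ) : Qbar) with hHQdef
  have hHQdeg : HQ.degree = (m : WithBot ℕ) := by
    rw [hHQdef, Polynomial.degree_add_eq_left_of_degree_lt, hBdeg]
    rw [hBdeg]
    refine lt_of_le_of_lt Polynomial.degree_C_le ?_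
    exact_mod_cast (by omega : 0 < m)
  have hHQne : HQ.degree ≠ 0 := by
    rw [hHQdeg]
    exact_mod_cast (by omega : m ≠ 0)
  obtain ⟨β, hβroot⟩ := IsAlgClosed.exists_root HQ hHQne
  have hβ0 : HQ.eval β = 0 := hβroot
  -- coefficients of HQ are integral
  have hHQint : ∀ j, IsIntegral ℤ (HQ.coeff j) := by
    intro j
    rw [hHQdef, Polynomial.coeff_add, hBdef, Polynomial.coeff_map]
    refine (IsIntegral.algebraMap (hH0int j)).add ?_
    rw [Polynomial.coeff_C]
    split_ifs
    · exact natCast_isIntegral _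
    · exact isIntegral_zero
  -- β is an algebraic integer
  have hHQmonic : HQ.Monic := by
    have : HQ.leadingCoeff = 1 := by
      rw [Polynomial.leadingCoeff, Polynomial.natDegree_eq_of_degree_eq_some hHQdeg]
      have hBm : B.Monic := hH0monic.map _
      rw [hHQdef, Polynomial.coeff_add, Polynomial.coeff_C,
        if_neg (by omega : ¬ m = 0), add_zero]
      have : B.natDegree = m := Polynomial.natDegree_eq_of_degree_eq_some hBdeg
      rw [← this]
      exact hBm.coeff_natDegree
    exact this
  have hβint : IsIntegral ℤ β := by
    have hsub : (↑HQ.coeffs : Set Qbar) ⊆ ((integralClosure ℤ Qbar).toSubring : Set Qbar) := by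
      intro x hx
      simp only [Polynomial.coeffs, Finset.mem_coe, Finset.mem_image] at hx
      obtain ⟨j, -, rfl⟩ := hx
      exact hHQint j
    set p := HQ.toSubring (integralClosure ℤ Qbar).toSubring hsub with hpdef
    have hpm : p.Monic := (Polynomial.monic_toSubring _ _ _).mpr hHQmonic
    have hmap : p.map ((integralClosure ℤ Qbar).toSubring.subtype) = HQ := by
      ext j
      rw [Polynomial.coeff_map]
      exact Polynomial.coeff_toSubring HQ _ hsub
    have hβA : IsIntegral (integralClosure ℤ Qbar) β := by
      refine ⟨p, hpm, ?_⟩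
      rw [Polynomial.eval₂_eq_eval_map]
      show ((p.map ((integralClosure ℤ Qbar).toSubring.subtype))).eval β = 0
      rw [hmap]
      exact hβ0
    exact isIntegral_trans β hβA
  refine ⟨β, hβint, fun hmem => hsT β hmem hβ0, ?_⟩
  -- the estimate
  intro τ
  set y : ℂ := τ β with hy
  set z : ℂ := τ α with hz
  set σA : L →ₐ[ℚ] ℂ := τ.comp (IsScalarTower.toAlgHom ℚ L Qbar) with hσA
  have hσAc : (σA : L →+* ℂ) = (τ : Qbar →+* ℂ).comp (algebraMap L Qbar) := rfl
  have hza : (σA : L →+* ℂ) a = z := by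
    rw [hz]
    rfl
  have h0 : Polynomial.eval₂ (σA : L →+* ℂ) y (H0 + Polynomial.C ((s : ℕ) : L)) = 0 := by
    have h1 : (H0 + Polynomial.C ((s : ℕ) : L)).map (algebraMap L Qbar) = HQ := by
      rw [Polynomial.map_add, Polynomial.map_C, hHQdef, hBdef, map_natCast]
    have hyc : y = (τ : Qbar →+* ℂ) β := rfl
    rw [hσAc, ← Polynomial.eval₂_map, h1, hyc, Polynomial.eval₂_at_apply]
    show τ (HQ.eval β) = 0
    rw [hβ0, map_zero]
  have hev : Polynomial.eval₂ (σA : L →+* ℂ) y (H0 + Polynomial.C ((s : ℕ) : L))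
      = ((y - z) ^ m + (∑ k ∈ range n, (σA : L →+* ℂ) (c k) * (y - z) ^ k))
        + ((s : ℕ) : ℂ) := by
    rw [Polynomial.eval₂_add, Polynomial.eval₂_C, hH0def, Polynomial.eval₂_add]
    congr 1
    · congr 1
      · rw [Polynomial.eval₂_pow, hgdef, Polynomial.eval₂_sub, Polynomial.eval₂_X,
          Polynomial.eval₂_C, hza]
      · rw [hEdef, Polynomial.eval₂_finset_sum]
        refine Finset.sum_congr rfl fun k _ => ?_
        rw [Polynomial.eval₂_mul, Polynomial.eval₂_C, Polynomial.eval₂_pow, hgdef,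
          Polynomial.eval₂_sub, Polynomial.eval₂_X, Polynomial.eval₂_C, hza]
    · exact map_natCast (σA : L →+* ℂ) s
  set w : ℝ := ‖y - z‖ with hwdef
  have hw0 : 0 ≤ w := norm_nonneg _
  have hwm : w ^ m ≤ C₁ * ∑ k ∈ range n, w ^ k := by
    have heq : (y - z) ^ m
        = -((∑ k ∈ range n, (σA : L →+* ℂ) (c k) * (y - z) ^ k) + ((s : ℕ) : ℂ)) := by
      have h2 := h0
      rw [hev] at h2
      linear_combination h2
    have habs : w ^ m
        = ‖(∑ k ∈ range n, (σA : L →+* ℂ) (c k) * (y - z) ^ k)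
            + ((s : ℕ) : ℂ)‖ := by
      rw [hwdef, ← norm_pow, heq, norm_neg]
    have hsum1 : (1 : ℝ) ≤ ∑ k ∈ range n, w ^ k := by
      have h01 : (1 : ℝ) = w ^ 0 := (pow_zero w).symm
      rw [h01]
      exact Finset.single_le_sum (f := fun k => w ^ k)
        (fun i _ => pow_nonneg hw0 i) (Finset.mem_range.mpr (by omega))
    have hsum0 : (0 : ℝ) ≤ ∑ k ∈ range n, w ^ k := by linarith
    have hTc : (0 : ℝ) ≤ T.card := Nat.cast_nonneg _
    have hsc : ((s : ℕ) : ℝ) ≤ T.card := by exact_mod_cast hsle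
    rw [habs]
    calc ‖(∑ k ∈ range n, (σA : L →+* ℂ) (c k) * (y - z) ^ k) + ((s : ℕ) : ℂ)‖
        ≤ ‖∑ k ∈ range n, (σA : L →+* ℂ) (c k) * (y - z) ^ k‖
          + ‖((s : ℕ) : ℂ)‖ := norm_add_le _ _
      _ ≤ (∑ k ∈ range n, C * w ^ k) + T.card := by
          gcongr
          · refine le_trans (norm_sum_le _ _) (Finset.sum_le_sum fun k _ => ?_)
            rw [norm_mul, norm_pow]
            exact mul_le_mul_of_nonneg_right (hcbd k σA) (pow_nonneg hw0 k)
          · rw [Complex.norm_natCast]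
            exact hsc
      _ = C * (∑ k ∈ range n, w ^ k) + T.card := by rw [Finset.mul_sum]
      _ ≤ C₁ * ∑ k ∈ range n, w ^ k := by
          rw [hC₁def]
          nlinarith [hsum1, hTc, hC0]
  have hwr : w < r' := by
    refine real_estimate hr' hC₁0 hn1 hJ hw0 ?_
    rw [hnm]
    exact hwm
  have hfinal : ‖τ α - τ β‖ = w := by
    rw [hwdef, hy, hz, ← norm_neg]
    congr 1
    ring
  rw [hfinal]
  exact hwr

end SzegoAux

/-- **Szegő.** For every `α ∈ Qbar` and real `r > 1` there are infinitely many algebraic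
integers `β` with `|α − β|_∞ < r`. -/
theorem szego (α : Qbar) (r : ℝ) (hr : 1 < r) :
    {β : Qbar | β ∈ Zbar ∧ maxAbs (α - β) < r}.Infinite := by
  set r' : ℝ := (1 + r) / 2 with hr'def
  have hr'1 : 1 < r' := by rw [hr'def]; linarith
  have hr'r : r' < r := by rw [hr'def]; linarith
  by_contra hfin
  rw [Set.not_infinite] at hfin
  obtain ⟨β, hint, hnotT, hbound⟩ := SzegoAux.key α r' hr'1 hfin.toFinset
  refine hnotT ?_
  rw [Set.Finite.mem_toFinset]
  constructor
  · exact hint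
  · have hble : ∀ σ : Qbar.field2 (α - β) (α - β) →ₐ[ℚ] ℂ,
        ‖σ ⟨α - β, Qbar.mem_field2_left _ _⟩‖ ≤ r' := by
      intro σ
      obtain ⟨τ, hτ⟩ := SzegoAux.exists_extension _ σ
      rw [← hτ ⟨α - β, Qbar.mem_field2_left _ _⟩]
      have hcoe : ((⟨α - β, Qbar.mem_field2_left _ _⟩ :
          Qbar.field2 (α - β) (α - β)) : Qbar) = α - β := rfl
      rw [hcoe, map_sub]
      exact (hbound τ).le
    haveI : Nonempty (Qbar.field2 (α - β) (α - β) →ₐ[ℚ] ℂ) := SzegoAux.nonempty_embedding _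
    calc maxAbs (α - β) ≤ r' := ciSup_le hble
      _ < r := hr'r

end
end

section
/- (Fekete) Let α ∈ ℚ̄ and let r ∈ ℝ with 0 < r < 1. Then there exist only finitely many algebraic integers β ∈ Z̄ such that |β − α|_∞ ≤ r. -/
open scoped ComplexConjugate ComplexOrder

noncomputable section

-- Aux lemma 1
theorem abs_le_maxAbs {F : IntermediateField ℚ Qbar} [FiniteDimensional ℚ F]
    (ψ : F →ₐ[ℚ] ℂ) (γ : Qbar) (hγ : γ ∈ F) :
    ‖ψ ⟨γ, hγ⟩‖ ≤ maxAbs γ := by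
  have hsub : Qbar.field2 γ γ ≤ F := by
    rw [Qbar.field2]
    refine IntermediateField.adjoin_le_iff.2 ?_
    intro x hx
    rcases hx with h | h
    · exact h ▸ hγ
    · exact h ▸ hγ
  let ι : Qbar.field2 γ γ →ₐ[ℚ] F := IntermediateField.inclusion hsub
  have key : ψ ⟨γ, hγ⟩ = (ψ.comp ι) ⟨γ, Qbar.mem_field2_left γ γ⟩ := by
    congr 1
  rw [key, maxAbs]
  exact le_ciSup (f := fun σ : Qbar.field2 γ γ →ₐ[ℚ] ℂ =>
    ‖σ ⟨γ, Qbar.mem_field2_left γ γ⟩‖)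
    (Set.Finite.bddAbove (Set.finite_range _)) (ψ.comp ι)

-- Aux lemma 2 : Vandermonde bound
theorem vandermonde_prod_bound {n : ℕ} (v : Fin n → ℂ) (c : ℂ) {r : ℝ} (hr : 0 ≤ r)
    (h : ∀ i, ‖v i - c‖ ≤ r) :
    ‖∏ i : Fin n, ∏ j ∈ Finset.Ioi i, (v j - v i) ^ 2‖
      ≤ (n.factorial : ℝ) ^ 2 * r ^ (n * (n - 1)) := by
  classical
  have h1 : (∏ i : Fin n, ∏ j ∈ Finset.Ioi i, (v j - v i) ^ 2)
      = (∏ i : Fin n, ∏ j ∈ Finset.Ioi i, (v j - v i)) ^ 2 := by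
    simp_rw [Finset.prod_pow]
  have h2 : (∏ i : Fin n, ∏ j ∈ Finset.Ioi i, (v j - v i))
      = (Matrix.vandermonde (fun i => v i - c)).det := by
    rw [Matrix.det_vandermonde]
    exact Finset.prod_congr rfl fun i _ => Finset.prod_congr rfl fun j _ => by ring
  have hdet : ‖(Matrix.vandermonde (fun i => v i - c)).det‖
      ≤ (n.factorial : ℝ) * ∏ i : Fin n, r ^ (i : ℕ) := by
    rw [Matrix.det_apply]
    refine le_trans (norm_sum_le _ _) ?_
    have hterm : ∀ σ : Equiv.Perm (Fin n),
        ‖Equiv.Perm.sign σ • ∏ i, Matrix.vandermonde (fun i => v i - c) (σ i) i‖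
          ≤ ∏ i : Fin n, r ^ (i : ℕ) := by
      intro σ
      have habs : ‖Equiv.Perm.sign σ •
          ∏ i, Matrix.vandermonde (fun i => v i - c) (σ i) i‖
          = ‖∏ i, Matrix.vandermonde (fun i => v i - c) (σ i) i‖ := by
        rcases Int.units_eq_one_or (Equiv.Perm.sign σ) with hs | hs <;>
          simp [hs, Units.smul_def]
      rw [habs, norm_prod]
      refine Finset.prod_le_prod (fun i _ => by positivity) (fun i _ => ?_)
      simp only [Matrix.vandermonde_apply, norm_pow]
      exact pow_le_pow_left₀ (by positivity) (h (σ i)) _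
    refine le_trans (Finset.sum_le_sum fun σ _ => hterm σ) ?_
    rw [Finset.sum_const, Finset.card_univ, Fintype.card_perm, nsmul_eq_mul]
    simp [Fintype.card_fin]
  have hsum : (∏ i : Fin n, r ^ (i : ℕ)) ^ 2 = r ^ (n * (n - 1)) := by
    rw [Finset.prod_pow_eq_pow_sum, ← pow_mul]
    congr 1
    rw [Fin.sum_univ_eq_sum_range (fun i => i) n]
    exact Finset.sum_range_id_mul_two n
  calc ‖∏ i : Fin n, ∏ j ∈ Finset.Ioi i, (v j - v i) ^ 2‖
      = ‖∏ i : Fin n, ∏ j ∈ Finset.Ioi i, (v j - v i)‖ ^ 2 := by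
        rw [h1, norm_pow]
    _ ≤ ((n.factorial : ℝ) * ∏ i : Fin n, r ^ (i : ℕ)) ^ 2 := by
        refine pow_le_pow_left₀ (by positivity) ?_ 2
        rw [h2]; exact hdet
    _ = (n.factorial : ℝ) ^ 2 * r ^ (n * (n - 1)) := by rw [mul_pow, hsum]

-- Aux lemma 3 : growth bound
theorem fekete_exists_bound {r : ℝ} (hr0 : 0 < r) (hr1 : r < 1) :
    ∃ B : ℕ, ∀ n : ℕ, 1 ≤ (n.factorial : ℝ) ^ 2 * r ^ (n * (n - 1)) → n ≤ B := by
  have hsum : Summable (fun n : ℕ => (n : ℝ) ^ 2 * r ^ n) := by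
    have := summable_pow_mul_geometric_of_norm_lt_one (R := ℝ) 2
      (r := r) (by rwa [Real.norm_eq_abs, abs_of_pos hr0])
    simpa using this
  have h0 := hsum.tendsto_atTop_zero
  obtain ⟨B, hB⟩ := Filter.eventually_atTop.mp (h0.eventually_lt_const hr0)
  refine ⟨B, fun n hn => ?_⟩
  by_contra hc
  push_neg at hc
  have hn1 : 1 ≤ n := le_trans (Nat.succ_le_succ (Nat.zero_le B)) hc
  have hx : (n : ℝ) ^ 2 * r ^ (n - 1) < 1 := by
    have h := hB n hc.le
    have h2 : (n : ℝ) ^ 2 * r ^ (n - 1) * r < 1 * r := by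
      rw [one_mul, mul_assoc, ← pow_succ, Nat.sub_add_cancel hn1]
      exact h
    exact lt_of_mul_lt_mul_right (by linarith) hr0.le
  have hxn : ((n : ℝ) ^ 2 * r ^ (n - 1)) ^ n < 1 :=
    pow_lt_one₀ (by positivity) hx (by omega)
  have hfact : (n.factorial : ℝ) ^ 2 * r ^ (n * (n - 1)) ≤ ((n : ℝ) ^ 2 * r ^ (n - 1)) ^ n := by
    calc (n.factorial : ℝ) ^ 2 * r ^ (n * (n - 1))
        ≤ ((n : ℝ) ^ n) ^ 2 * r ^ (n * (n - 1)) := by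
          gcongr
          exact_mod_cast Nat.factorial_le_pow n
      _ = ((n : ℝ) ^ 2 * r ^ (n - 1)) ^ n := by
          rw [mul_pow, ← pow_mul, ← pow_mul, ← pow_mul, Nat.mul_comm n 2,
            Nat.mul_comm (n - 1) n]
  have := lt_of_le_of_lt hfact hxn
  linarith

set_option maxHeartbeats 1000000 in
set_option synthInstance.maxHeartbeats 400000 in
open IntermediateField in
theorem aroots_abs_le (α : Qbar) {r : ℝ} {β : Qbar} (hβr : maxAbs (β - α) ≤ r) :
    ∀ z ∈ (minpoly ℚ β).aroots ℂ, ‖z‖ ≤ maxAbs α + r := by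
  intro z hz
  set E := Qbar.field2 α β with hE
  letI : Algebra ℚ ↥E := E.algebra'
  have hαE : α ∈ E := Qbar.mem_field2_left α β
  have hβE : β ∈ E := Qbar.mem_field2_right α β
  set Bel : E := ⟨β, hβE⟩ with hBel
  have hvalinj : Function.Injective (E.val) := Subtype.val_injective
  have hmin : minpoly ℚ Bel = minpoly ℚ β := (minpoly.algHom_eq E.val hvalinj Bel).symm
  have hint : IsIntegral ℚ Bel := IsIntegral.of_finite ℚ Bel
  let pb2 := IntermediateField.adjoin.powerBasis hint
  have hz' : Polynomial.aeval z (minpoly ℚ pb2.gen) = 0 := by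
    have : pb2.gen = IntermediateField.AdjoinSimple.gen ℚ Bel := rfl
    rw [this, show minpoly ℚ (AdjoinSimple.gen ℚ Bel) = minpoly ℚ Bel from
      IntermediateField.minpoly_gen (F := ℚ) Bel, hmin]
    exact ((Polynomial.mem_aroots.mp hz).2)
  let φ0 : ↥ℚ⟮Bel⟯ →ₐ[ℚ] ℂ := pb2.lift z hz'
  letI : Algebra (↥ℚ⟮Bel⟯) ℂ := φ0.toRingHom.toAlgebra
  haveI : IsScalarTower ℚ (↥ℚ⟮Bel⟯) ℂ :=
    IsScalarTower.of_algebraMap_eq fun x => (φ0.commutes x).symm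
  haveI : FiniteDimensional (↥ℚ⟮Bel⟯) E := Module.Finite.right ℚ (↥ℚ⟮Bel⟯) E
  haveI : Algebra.IsAlgebraic (↥ℚ⟮Bel⟯) E := Algebra.IsAlgebraic.of_finite _ _
  let Ψ : E →ₐ[↥ℚ⟮Bel⟯] ℂ := IsAlgClosed.lift
  let ψ : E →ₐ[ℚ] ℂ := Ψ.restrictScalars ℚ
  have hψB : ψ Bel = z := by
    have h1 : Bel = algebraMap (↥ℚ⟮Bel⟯) E (IntermediateField.AdjoinSimple.gen ℚ Bel) := rfl
    calc ψ Bel = Ψ (algebraMap (↥ℚ⟮Bel⟯) E (IntermediateField.AdjoinSimple.gen ℚ Bel)) := by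
          rw [← h1]; rfl
      _ = algebraMap (↥ℚ⟮Bel⟯) ℂ (IntermediateField.AdjoinSimple.gen ℚ Bel) := Ψ.commutes _
      _ = φ0 (IntermediateField.AdjoinSimple.gen ℚ Bel) := rfl
      _ = z := pb2.lift_gen z hz'
  have hsplit : Bel = (⟨α, hαE⟩ : E) + ⟨β - α, sub_mem hβE hαE⟩ := by
    apply Subtype.ext
    push_cast
    ring
  have : ‖z‖ ≤ ‖ψ ⟨α, hαE⟩‖ + ‖ψ ⟨β - α, sub_mem hβE hαE⟩‖ := by
    rw [← hψB, hsplit, map_add]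
    exact norm_add_le _ _
  refine this.trans (add_le_add ?_ ?_)
  · exact abs_le_maxAbs ψ α hαE
  · exact (abs_le_maxAbs ψ (β - α) (sub_mem hβE hαE)).trans hβr

set_option maxHeartbeats 2000000 in
set_option synthInstance.maxHeartbeats 400000 in
open IntermediateField in
theorem minpoly_natDegree_le (α : Qbar) {r : ℝ} (hr : 0 ≤ r) {B : ℕ}
    (hB : ∀ n : ℕ, 1 ≤ (n.factorial : ℝ) ^ 2 * r ^ (n * (n - 1)) → n ≤ B)
    {β : Qbar} (hβ : IsIntegral ℤ β) (hβr : maxAbs (β - α) ≤ r) :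
    (minpoly ℚ β).natDegree ≤ B * (minpoly ℚ α).natDegree := by
  set E := Qbar.field2 α β with hE
  letI : Algebra ℚ ↥E := E.algebra'
  have hαE : α ∈ E := Qbar.mem_field2_left α β
  have hβE : β ∈ E := Qbar.mem_field2_right α β
  set A : E := ⟨α, hαE⟩ with hA
  set Bel : E := ⟨β, hβE⟩ with hBel
  set K : IntermediateField ℚ ↥E := ℚ⟮A⟯ with hK
  haveI : FiniteDimensional ℚ ↥K := inferInstance
  -- `E = ℚ(A, Bel)`
  have htop2 : adjoin ℚ {A, Bel} = (⊤ : IntermediateField ℚ ↥E) := by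
    apply IntermediateField.lift_injective E
    rw [IntermediateField.lift_adjoin, IntermediateField.lift_top]
    rw [Set.image_pair]
    exact rfl
  have htop : adjoin (↥K) {Bel} = (⊤ : IntermediateField ↥K ↥E) := by
    apply IntermediateField.restrictScalars_injective ℚ
    rw [hK, show (adjoin (↥ℚ⟮A⟯) {Bel}).restrictScalars ℚ = adjoin ℚ ({A} ∪ {Bel}) from
      IntermediateField.adjoin_adjoin_left (F := ℚ) (S := ({A} : Set ↥E)) (T := ({Bel} : Set ↥E)), IntermediateField.restrictScalars_top]
    rw [Set.singleton_union]
    exact htop2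
  haveI : FiniteDimensional ↥K ↥E := Module.Finite.right ℚ ↥K ↥E
  have hBK : IsIntegral ↥K Bel := IsIntegral.of_finite ↥K Bel
  let pb : PowerBasis ↥K ↥E :=
    (IntermediateField.adjoin.powerBasis hBK).map
      ((IntermediateField.equivOfEq htop).trans IntermediateField.topEquiv)
  have hgen : pb.gen = Bel := rfl
  set n := pb.dim with hn
  haveI : CharZero ↥K := charZero_of_injective_algebraMap (algebraMap ℚ ↥K).injective
  haveI : IsScalarTower ℤ ↥K ↥E := IsScalarTower.of_algebraMap_eq fun x => by
    simp only [algebraMap_int_eq, eq_intCast, map_intCast]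
  have hBint : IsIntegral ℤ Bel := by
    have h0 : IsIntegral ℤ ((E.val.restrictScalars ℤ) Bel) := hβ
    exact (isIntegral_algHom_iff (E.val.restrictScalars ℤ) Subtype.val_injective).mp h0
  set disc := Algebra.discr ↥K pb.basis with hdisc
  have hd0 : disc ≠ 0 := Algebra.discr_not_zero_of_basis ↥K pb.basis
  have hdint : IsIntegral ℤ disc := by
    refine Algebra.discr_isIntegral ↥K (fun i => ?_)
    rw [pb.basis_eq_pow i]
    exact (hgen ▸ hBint).pow _
  set N := Algebra.norm ℚ disc with hN
  have hNint : IsIntegral ℤ N := Algebra.isIntegral_norm (K := ℚ) hdint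
  obtain ⟨m, hm⟩ := IsIntegrallyClosed.isIntegral_iff.mp hNint
  have hm' : (m : ℚ) = N := by rw [← hm]; simp
  have hN0 : N ≠ 0 := by
    rw [hN]
    exact Algebra.norm_ne_zero_iff.mpr hd0
  have hm0 : m ≠ 0 := by
    rintro rfl
    rw [← hm'] at hN0
    simp at hN0
  have h1N : (1 : ℝ) ≤ ‖algebraMap ℚ ℂ N‖ := by
    rw [← hm']
    have h2 : (algebraMap ℚ ℂ) ((m : ℚ)) = (m : ℂ) := map_intCast (algebraMap ℚ ℂ) m
    rw [h2, Complex.norm_intCast]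
    exact_mod_cast Int.one_le_abs hm0
  have hprod : algebraMap ℚ ℂ N = ∏ τ : ↥K →ₐ[ℚ] ℂ, τ disc :=
    Algebra.norm_eq_prod_embeddings ℚ ℂ disc
  have hbound : ∀ τ : ↥K →ₐ[ℚ] ℂ,
      ‖τ disc‖ ≤ (n.factorial : ℝ) ^ 2 * r ^ (n * (n - 1)) := by
    intro τ
    letI : Algebra ↥K ℂ := τ.toRingHom.toAlgebra
    haveI : IsScalarTower ℚ ↥K ℂ := IsScalarTower.of_algebraMap_eq fun x => (τ.commutes x).symm
    have hcard : Fintype.card (↥E →ₐ[↥K] ℂ) = pb.dim := by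
      rw [AlgHom.card ↥K ↥E ℂ, pb.finrank]
    let e : Fin pb.dim ≃ (↥E →ₐ[↥K] ℂ) := (Fintype.equivFinOfCardEq hcard).symm
    have hdiscτ := Algebra.discr_powerBasis_eq_prod ↥K ℂ pb e
    have hτ : τ disc = algebraMap ↥K ℂ disc := rfl
    rw [hτ, hdiscτ]
    have hAK : A ∈ K := IntermediateField.mem_adjoin_simple_self ℚ A
    refine vandermonde_prod_bound (fun i => (e i) pb.gen) (algebraMap ↥K ℂ ⟨A, hAK⟩) hr ?_
    intro i
    have h1 : (e i) pb.gen - algebraMap ↥K ℂ ⟨A, hAK⟩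
        = (e i) (pb.gen - algebraMap ↥K ↥E ⟨A, hAK⟩) := by
      rw [map_sub, AlgHom.commutes]
    rw [h1]
    have h2 : pb.gen - algebraMap ↥K ↥E ⟨A, hAK⟩ = (⟨β - α, sub_mem hβE hαE⟩ : ↥E) := by
      rw [hgen]
      apply Subtype.ext
      rfl
    rw [h2]
    exact (abs_le_maxAbs ((e i).restrictScalars ℚ) (β - α) (sub_mem hβE hαE)).trans hβr
  have hcardK : 0 < Fintype.card (↥K →ₐ[ℚ] ℂ) := by
    rw [AlgHom.card ℚ ↥K ℂ]
    exact Module.finrank_pos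
  have hMn : 1 ≤ (n.factorial : ℝ) ^ 2 * r ^ (n * (n - 1)) := by
    by_contra hM
    push_neg at hM
    have habs : ‖algebraMap ℚ ℂ N‖ = ∏ τ : ↥K →ₐ[ℚ] ℂ, ‖τ disc‖ := by
      rw [hprod, norm_prod]
    have hle : ‖algebraMap ℚ ℂ N‖
        ≤ ((n.factorial : ℝ) ^ 2 * r ^ (n * (n - 1))) ^ Fintype.card (↥K →ₐ[ℚ] ℂ) := by
      calc ‖algebraMap ℚ ℂ N‖ = ∏ τ : ↥K →ₐ[ℚ] ℂ, ‖τ disc‖ := habs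
        _ ≤ ∏ _τ : ↥K →ₐ[ℚ] ℂ, ((n.factorial : ℝ) ^ 2 * r ^ (n * (n - 1))) :=
            Finset.prod_le_prod (fun _ _ => norm_nonneg _) (fun τ _ => hbound τ)
        _ = _ := by rw [Finset.prod_const, Finset.card_univ]
    have hlt : ((n.factorial : ℝ) ^ 2 * r ^ (n * (n - 1))) ^ Fintype.card (↥K →ₐ[ℚ] ℂ) < 1 :=
      pow_lt_one₀ (by positivity) hM hcardK.ne'
    linarith
  have hnB : n ≤ B := hB n hMn
  -- final degree computation
  have hintβ : IsIntegral ℚ β := IsAlgebraic.isIntegral ((AlgebraicClosure.isAlgebraic ℚ).isAlgebraic β)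
  have hdegβ : (minpoly ℚ β).natDegree
      = Module.finrank ℚ ↥(ℚ⟮β⟯ : IntermediateField ℚ Qbar) :=
    (IntermediateField.adjoin.finrank hintβ).symm
  have hsub : (ℚ⟮β⟯ : IntermediateField ℚ Qbar) ≤ E := by
    refine IntermediateField.adjoin_le_iff.2 ?_
    intro x hx
    rcases hx with rfl
    exact hβE
  have hle2 : Module.finrank ℚ ↥(ℚ⟮β⟯ : IntermediateField ℚ Qbar) ≤ Module.finrank ℚ ↥E :=
    LinearMap.finrank_le_finrank_of_injective
      (f := (IntermediateField.inclusion hsub).toLinearMap)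
      (fun x y hxy => Subtype.ext (congrArg Subtype.val hxy : _))
  have hrankE : Module.finrank ℚ ↥E = (minpoly ℚ α).natDegree * n := by
    rw [← Module.finrank_mul_finrank ℚ ↥K ↥E]
    congr 1
    · rw [hK, IntermediateField.adjoin.finrank (IsIntegral.of_finite ℚ A)]
      congr 1
      exact (minpoly.algHom_eq E.val Subtype.val_injective A).symm
    · exact pb.finrank
  calc (minpoly ℚ β).natDegree
      = Module.finrank ℚ ↥(ℚ⟮β⟯ : IntermediateField ℚ Qbar) := hdegβ
    _ ≤ Module.finrank ℚ ↥E := hle2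
    _ = (minpoly ℚ α).natDegree * n := hrankE
    _ ≤ (minpoly ℚ α).natDegree * B := Nat.mul_le_mul_left _ hnB
    _ = B * (minpoly ℚ α).natDegree := Nat.mul_comm _ _

open Polynomial in
theorem fekete_finite_aux (D : ℕ) (H : ℝ) :
    {β : Qbar | IsIntegral ℤ β ∧ (minpoly ℚ β).natDegree ≤ D ∧
      ∀ z ∈ (minpoly ℚ β).aroots ℂ, ‖z‖ ≤ H}.Finite := by
  classical
  let C := Nat.ceil (max H 1 ^ D * D.choose (D / 2))
  have hfin := Polynomial.bUnion_roots_finite (algebraMap ℤ Qbar) D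
    (Set.finite_Icc (-(C : ℤ)) C)
  refine hfin.subset fun x hx => ?_
  obtain ⟨hint, hdeg, hroots⟩ := hx
  have hQint : IsIntegral ℚ x := IsAlgebraic.isIntegral ((AlgebraicClosure.isAlgebraic ℚ).isAlgebraic x)
  have h_map := minpoly.isIntegrallyClosed_eq_field_fractions' ℚ hint
  simp_rw [Set.mem_iUnion]
  refine ⟨minpoly ℤ x, ⟨?_, fun i => ?_⟩, ?_⟩
  · rw [← (minpoly.monic hint).natDegree_map (algebraMap ℤ ℚ), ← h_map]
    exact hdeg
  · have hcoeff : ‖(minpoly ℚ x).coeff i‖ ≤ max H 1 ^ D * D.choose (D / 2) := by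
      rw [← norm_algebraMap' ℂ, ← Polynomial.coeff_map (algebraMap ℚ ℂ)]
      refine Polynomial.coeff_bdd_of_roots_le _ (minpoly.monic hQint)
        (IsAlgClosed.splits _) hdeg (fun z hz => ?_) i
      have := hroots z hz
      exact this
    rw [Set.mem_Icc, ← abs_le, ← @Int.cast_le ℝ]
    refine (Eq.trans_le ?_ <| hcoeff).trans (Nat.le_ceil _)
    rw [h_map, coeff_map, eq_intCast, Int.norm_cast_rat, Int.norm_eq_abs, Int.cast_abs]
  · exact Polynomial.mem_rootSet.2 ⟨minpoly.ne_zero hint, minpoly.aeval ℤ x⟩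

/-- **Fekete.** For every `α ∈ Qbar` and real `0 < r < 1` there are only finitely many
algebraic integers `β` with `|β − α|_∞ ≤ r`. -/
theorem fekete (α : Qbar) (r : ℝ) (hr0 : 0 < r) (hr1 : r < 1) :
    {β : Qbar | β ∈ Zbar ∧ maxAbs (β - α) ≤ r}.Finite := by
  obtain ⟨B, hB⟩ := fekete_exists_bound hr0 hr1
  refine (fekete_finite_aux (B * (minpoly ℚ α).natDegree) (maxAbs α + r)).subset ?_
  rintro β ⟨hβZ, hβr⟩
  have hint : IsIntegral ℤ β := hβZ
  exact ⟨hint, minpoly_natDegree_le α hr0.le hB hint hβr, aroots_abs_le α hβr⟩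

end
end

section
/- Let H be a real Hilbert space and let Λ ⊆ H be a discrete additive subgroup. Then Λ is almost free as an abelian group: every countable subgroup of Λ is a free abelian group (a free ℤ-module). -/
/-- Auxiliary: extend an independent spanning set of a submodule `P` to one of a
finitely generated submodule `Q ⊇ P`, provided `P` is saturated in `Q`. -/
lemma extend_basis_step {M : Type*} [AddCommGroup M]
    (P Q : Submodule ℤ M) (hPQ : P ≤ Q) [Module.Finite ℤ Q]
    (hsat : ∀ x : M, ∀ k : ℤ, k ≠ 0 → k • x ∈ P → x ∈ P)
    (S : Set M) (hS : LinearIndependent ℤ ((↑) : S → M))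
    (hspan : Submodule.span ℤ S = P) :
    ∃ T : Set M, S ⊆ T ∧ LinearIndependent ℤ ((↑) : T → M) ∧ Submodule.span ℤ T = Q := by
  classical
  set P' : Submodule ℤ Q := P.comap Q.subtype with hP'
  haveI : Module.Finite ℤ (Q ⧸ P') := Module.Finite.quotient ℤ _
  haveI : NoZeroSMulDivisors ℤ (Q ⧸ P') := by
    constructor
    intro a x hx
    by_cases ha : a = 0
    · exact Or.inl ha
    · right
      obtain ⟨y, rfl⟩ := P'.mkQ_surjective x
      rw [← map_smul, Submodule.mkQ_apply, Submodule.Quotient.mk_eq_zero] at hx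
      have hay : a • (y : M) ∈ P := hx
      have : (y : M) ∈ P := hsat _ a ha hay
      rwa [Submodule.mkQ_apply, Submodule.Quotient.mk_eq_zero]
  haveI : Module.Free ℤ (Q ⧸ P') := Module.free_of_finite_type_torsion_free'
  obtain ⟨σ, hσ⟩ := Module.projective_lifting_property P'.mkQ (LinearMap.id)
    (P'.mkQ_surjective)
  have hσ' : ∀ z : Q ⧸ P', P'.mkQ (σ z) = z := fun z => by
    simpa using LinearMap.congr_fun hσ z
  set b := Module.Free.chooseBasis ℤ (Q ⧸ P') with hb
  set g : Module.Free.ChooseBasisIndex ℤ (Q ⧸ P') → M :=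
    fun i => ((Q.subtype.comp σ) (b i) : M) with hg
  have hinj : Function.Injective (Q.subtype.comp σ) := by
    intro x y h
    have := congrArg P'.mkQ (Subtype.ext h : σ x = σ y)
    rwa [hσ', hσ'] at this
  have hgli : LinearIndependent ℤ g :=
    (b.linearIndependent.map' (Q.subtype.comp σ) (LinearMap.ker_eq_bot.mpr hinj))
  have hrange_span : Submodule.span ℤ (Set.range g) = LinearMap.range (Q.subtype.comp σ) := by
    have : Set.range g = ⇑(Q.subtype.comp σ) '' (Set.range ⇑b) := by
      rw [← Set.range_comp]; rfl
    rw [this, ← Submodule.map_span, b.span_eq, Submodule.map_top]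
  have hdisj : Disjoint (Submodule.span ℤ S) (Submodule.span ℤ (Set.range g)) := by
    rw [hspan, hrange_span, disjoint_iff_inf_le]
    rintro x ⟨hxP, z, rfl⟩
    have hz : σ z ∈ P' := hxP
    have : z = 0 := by
      rw [← hσ' z, Submodule.mkQ_apply, Submodule.Quotient.mk_eq_zero]
      exact hz
    simp [this]
  refine ⟨S ∪ Set.range g, Set.subset_union_left, LinearIndepOn.union (v := id) hS hgli.linearIndepOn_id (by simpa using hdisj), ?_⟩
  rw [Submodule.span_union, hspan, hrange_span]
  apply le_antisymm
  · refine sup_le hPQ ?_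
    rintro x ⟨z, rfl⟩
    exact (σ z).2
  · intro x hx
    set q : Q := ⟨x, hx⟩ with hq
    have h1 : ((q - σ (P'.mkQ q) : Q) : M) ∈ P := by
      have : q - σ (P'.mkQ q) ∈ P' := by
        have h0 : P'.mkQ (q - σ (P'.mkQ q)) = 0 := by rw [map_sub, hσ', sub_self]
        rwa [Submodule.mkQ_apply, Submodule.Quotient.mk_eq_zero] at h0
      exact this
    have h2 : ((σ (P'.mkQ q) : Q) : M) ∈ LinearMap.range (Q.subtype.comp σ) :=
      ⟨P'.mkQ q, rfl⟩
    have : x = ((q - σ (P'.mkQ q) : Q) : M) + ((σ (P'.mkQ q) : Q) : M) := by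
      simp [hq]
    rw [this]
    exact Submodule.add_mem_sup h1 h2

/-- **Discrete subgroups of real Hilbert spaces are almost free**: every countable subgroup
of a discrete additive subgroup of a real Hilbert space is a free abelian group. -/
theorem discrete_subgroup_almost_free (H : Type*) [NormedAddCommGroup H]
    [InnerProductSpace ℝ H] [CompleteSpace H] (Λ : AddSubgroup H)
    (hdisc : ∃ r > (0 : ℝ), ∀ x ∈ Λ, x ≠ 0 → r ≤ ‖x‖ ^ 2)
    (Λ' : AddSubgroup H) (hle : Λ' ≤ Λ) (hcount : Countable Λ') :
    Module.Free ℤ Λ' := by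
  classical
  obtain ⟨r, hr, hnorm⟩ := hdisc
  haveI : Nonempty Λ' := ⟨0⟩
  obtain ⟨f, hf⟩ := exists_surjective_nat Λ'
  set V : ℕ → Submodule ℝ H := fun n => Submodule.span ℝ ((((↑) : Λ' → H) ∘ f) '' Set.Iio n)
    with hV
  set N : ℕ → Submodule ℤ Λ' := fun n =>
    Submodule.comap (Λ'.subtype.toIntLinearMap) ((V n).restrictScalars ℤ) with hN
  have hmemN : ∀ (n) (x : Λ'), x ∈ N n ↔ (x : H) ∈ V n := fun n x => Iff.rfl
  have hNmono : Monotone N := by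
    intro m n hmn x hx
    exact Submodule.span_mono (Set.image_mono (Set.Iio_subset_Iio hmn)) hx
  -- saturation
  have hsat : ∀ (n) (x : Λ') (k : ℤ), k ≠ 0 → k • x ∈ N n → x ∈ N n := by
    intro n x k hk hkx
    rw [hmemN] at hkx ⊢
    have hcoe : ((k • x : Λ') : H) = (k : ℝ) • (x : H) := by
      push_cast
      rw [Int.cast_smul_eq_zsmul]
    rw [hcoe] at hkx
    have hk' : (k : ℝ) ≠ 0 := Int.cast_ne_zero.mpr hk
    have := Submodule.smul_mem (V n) (k : ℝ)⁻¹ hkx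
    rwa [inv_smul_smul₀ hk'] at this
  -- finiteness of each N n
  have hfin : ∀ n, Module.Finite ℤ (N n) := by
    intro n
    haveI : FiniteDimensional ℝ (V n) :=
      FiniteDimensional.span_of_finite ℝ ((Set.finite_Iio n).image _)
    set L : Submodule ℤ (V n) :=
      Submodule.comap ((V n).subtype.restrictScalars ℤ) (AddSubgroup.toIntSubmodule Λ') with hL
    haveI : DiscreteTopology L := by
      apply DiscreteTopology.of_forall_le_norm (r := Real.sqrt r) (Real.sqrt_pos.mpr hr)
      intro x hx
      have hxH : ((x : V n) : H) ≠ 0 := by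
        intro h
        apply hx
        ext
        exact h
      have hxΛ : ((x : V n) : H) ∈ Λ := hle x.2
      have h2 : r ≤ ‖((x : V n) : H)‖ ^ 2 := hnorm _ hxΛ hxH
      have h3 : Real.sqrt r ≤ Real.sqrt (‖((x : V n) : H)‖ ^ 2) := Real.sqrt_le_sqrt h2
      rwa [Real.sqrt_sq (norm_nonneg _)] at h3
    haveI : Module.Finite ℤ L := inferInstance
    -- N n ≃ₗ[ℤ] L
    have e : (N n) ≃ₗ[ℤ] L :=
      { toFun := fun x => ⟨⟨(x : Λ'), x.2⟩, (x : Λ').2⟩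
        invFun := fun y => ⟨⟨((y : V n) : H), y.2⟩, (y : V n).2⟩
        map_add' := fun x y => rfl
        map_smul' := fun k x => rfl
        left_inv := fun x => rfl
        right_inv := fun y => rfl }
    exact Module.Finite.equiv e.symm
  -- build an increasing chain of independent spanning sets
  have hext : ∀ (n) (S : Set Λ'), LinearIndependent ℤ ((↑) : S → Λ') →
      Submodule.span ℤ S = N n →
      ∃ T, S ⊆ T ∧ LinearIndependent ℤ ((↑) : T → Λ') ∧ Submodule.span ℤ T = N (n + 1) := by
    intro n S h1 h2
    haveI := hfin (n + 1)
    exact extend_basis_step (N n) (N (n + 1)) (hNmono (Nat.le_succ n))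
      (fun x k hk hkx => hsat n x k hk hkx) S h1 h2
  have hN0 : (⊥ : Submodule ℤ Λ') = N 0 := by
    apply le_antisymm bot_le
    intro x hx
    rw [hmemN] at hx
    have : V 0 = ⊥ := by
      have he : Set.Iio (0 : ℕ) = (∅ : Set ℕ) := by ext; simp
      simp [hV, he]
    rw [this] at hx
    have : (x : H) = 0 := hx
    simpa [Submodule.mem_bot] using Subtype.ext this
  have base : LinearIndependent ℤ ((↑) : (∅ : Set Λ') → Λ') ∧
      Submodule.span ℤ (∅ : Set Λ') = N 0 := by
    constructor
    · exact linearIndependent_empty_type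
    · rw [Submodule.span_empty, hN0]
  let G : ∀ n : ℕ, {S : Set Λ' // LinearIndependent ℤ ((↑) : S → Λ') ∧
      Submodule.span ℤ S = N n} := fun n =>
    Nat.rec (motive := fun n => {S : Set Λ' // LinearIndependent ℤ ((↑) : S → Λ') ∧
        Submodule.span ℤ S = N n}) ⟨∅, base⟩
      (fun n p => ⟨(hext n p.1 p.2.1 p.2.2).choose,
        (hext n p.1 p.2.1 p.2.2).choose_spec.2.1,
        (hext n p.1 p.2.1 p.2.2).choose_spec.2.2⟩) n
  have hchain : ∀ n, (G n).1 ⊆ (G (n + 1)).1 := fun n =>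
    (hext n (G n).1 (G n).2.1 (G n).2.2).choose_spec.1
  have hGmono : Monotone (fun n => (G n).1) := monotone_nat_of_le_succ hchain
  set U : Set Λ' := ⋃ n, (G n).1 with hU
  have hUli : LinearIndependent ℤ ((↑) : U → Λ') :=
    linearIndepOn_iUnion_of_directed (v := id) hGmono.directed_le (fun n => (G n).2.1)
  have hUspan : Submodule.span ℤ U = ⊤ := by
    rw [eq_top_iff]
    intro x _
    obtain ⟨n, rfl⟩ := hf x
    have hx : f n ∈ N (n + 1) := by
      rw [hmemN]
      exact Submodule.subset_span ⟨n, Nat.lt_succ_self n, rfl⟩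
    rw [← (G (n + 1)).2.2] at hx
    exact Submodule.span_mono (Set.subset_iUnion (fun n => (G n).1) (n + 1)) hx
  exact Module.Free.of_basis (Module.Basis.mk hUli (by rw [Subtype.range_coe, hUspan]))
end

section
/- Let H be a real Hilbert space, let Λ ⊆ H be a discrete additive subgroup, and define the Voronoi cell vor(Λ) = {z ∈ H : ∀ x ∈ Λ with x ≠ 0, ‖z‖ < ‖z − x‖}. Let indec(Λ) be the set of indecomposable elements of Λ. Then vor(Λ) = {z ∈ H : ∀ x ∈ indec(Λ), ‖z‖ < ‖z − x‖}, and for every subset S ⊆ Λ satisfying vor(Λ) = {z ∈ H : ∀ x ∈ S, ‖z‖ < ‖z − x‖} one has indec(Λ) ⊆ S; that is, indec(Λ) is the unique inclusion-minimal such subset. -/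
open scoped RealInnerProductSpace

/-- `x` is an indecomposable element of the discrete subgroup `Λ` of a real Hilbert space. -/
def AddSubgroup.IsIndecElem {H : Type*} [NormedAddCommGroup H] [InnerProductSpace ℝ H]
    (Λ : AddSubgroup H) (x : H) : Prop :=
  x ∈ Λ ∧ x ≠ 0 ∧ ∀ y z : H, y ∈ Λ → z ∈ Λ → x = y + z → 0 ≤ ⟪y, z⟫ → y = 0 ∨ z = 0

/-- The (open) Voronoi cell of the subgroup `Λ`. -/
def AddSubgroup.vor {H : Type*} [NormedAddCommGroup H] [InnerProductSpace ℝ H]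
    (Λ : AddSubgroup H) : Set H :=
  {z : H | ∀ x ∈ Λ, x ≠ 0 → ‖z‖ < ‖z - x‖}

lemma vor_key_iff {H : Type*} [NormedAddCommGroup H] [InnerProductSpace ℝ H] (z x : H) :
    ‖z‖ < ‖z - x‖ ↔ 2 * ⟪z, x⟫ < ‖x‖ ^ 2 := by
  have h := norm_sub_sq_real z x
  constructor
  · intro hlt
    have h2 : ‖z‖ ^ 2 < ‖z - x‖ ^ 2 := by nlinarith [norm_nonneg z]
    nlinarith
  · intro hlt
    have h2 : ‖z‖ ^ 2 < ‖z - x‖ ^ 2 := by nlinarith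
    nlinarith [norm_nonneg z, norm_nonneg (z - x)]

lemma vor_induct {H : Type*} [NormedAddCommGroup H] [InnerProductSpace ℝ H]
    (Λ : AddSubgroup H) (r : ℝ) (hr : 0 < r)
    (hd : ∀ x ∈ Λ, x ≠ 0 → r ≤ ‖x‖ ^ 2) (z : H)
    (hz : ∀ x, Λ.IsIndecElem x → ‖z‖ < ‖z - x‖) :
    ∀ n : ℕ, ∀ x ∈ Λ, x ≠ 0 → ‖x‖ ^ 2 ≤ n * r → ‖z‖ < ‖z - x‖ := by
  intro n
  induction n with
  | zero =>
    intro x hx hx0 hb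
    have := hd x hx hx0
    simp at hb
    exact absurd hb hx0
  | succ n ih =>
    intro x hx hx0 hb
    by_cases hi : Λ.IsIndecElem x
    · exact hz x hi
    · unfold AddSubgroup.IsIndecElem at hi
      push_neg at hi
      obtain ⟨y, w, hy, hw, hxyw, hip, hy0, hw0⟩ := hi hx hx0
      have hny := hd y hy hy0
      have hnw := hd w hw hw0
      have hsum : ‖x‖ ^ 2 = ‖y‖ ^ 2 + 2 * ⟪y, w⟫ + ‖w‖ ^ 2 := by
        rw [hxyw]; exact norm_add_sq_real y w
      have hby : ‖y‖ ^ 2 ≤ n * r := by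
        push_cast at hb ⊢; nlinarith
      have hbw : ‖w‖ ^ 2 ≤ n * r := by
        push_cast at hb ⊢; nlinarith
      have h1 := (vor_key_iff z y).mp (ih y hy hy0 hby)
      have h2 := (vor_key_iff z w).mp (ih w hw hw0 hbw)
      rw [vor_key_iff, hxyw, inner_add_right]
      have hyw := norm_add_sq_real y w
      nlinarith

/-- The Voronoi cell of a discrete subgroup `Λ` of a real Hilbert space is cut out by the
indecomposable elements of `Λ`, and `indec(Λ)` is contained in every subset `S ⊆ Λ` cutting
out the Voronoi cell; i.e. it is the unique inclusion-minimal such set. -/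
theorem voronoi_eq_indec_cut (H : Type*) [NormedAddCommGroup H] [InnerProductSpace ℝ H]
    [CompleteSpace H] (Λ : AddSubgroup H)
    (hdisc : ∃ r > (0 : ℝ), ∀ x ∈ Λ, x ≠ 0 → r ≤ ‖x‖ ^ 2) :
    Λ.vor = {z : H | ∀ x, Λ.IsIndecElem x → ‖z‖ < ‖z - x‖} ∧
    ∀ S : Set H, S ⊆ (Λ : Set H) →
      Λ.vor = {z : H | ∀ x ∈ S, ‖z‖ < ‖z - x‖} → {x : H | Λ.IsIndecElem x} ⊆ S := by
  obtain ⟨r, hr, hd⟩ := hdisc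
  constructor
  · ext z
    simp only [AddSubgroup.vor, Set.mem_setOf_eq]
    constructor
    · intro h x hx
      exact h x hx.1 hx.2.1
    · intro h x hx hx0
      obtain ⟨n, hn⟩ := exists_nat_ge (‖x‖ ^ 2 / r)
      have hb : ‖x‖ ^ 2 ≤ n * r := by
        rw [div_le_iff₀ hr] at hn; linarith
      exact vor_induct Λ r hr hd z h n x hx hx0 hb
  · intro S hSΛ hS v hv
    obtain ⟨hvΛ, hv0, hvind⟩ := hv
    -- 0 ∈ vor, hence every element of S is nonzero
    have h0 : (0 : H) ∈ Λ.vor := by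
      intro x hx hx0
      simpa using norm_pos_iff.mpr hx0
    have hSne : ∀ x ∈ S, x ≠ 0 := by
      intro x hx
      have := (hS ▸ h0) x hx
      intro h; rw [h] at this; simp at this
    -- v/2 is not in vor
    have hhalf : ((1:ℝ)/2) • v ∉ Λ.vor := by
      intro h
      have h1 := h v hvΛ hv0
      have h2 : ‖((1:ℝ)/2) • v - v‖ = ‖((1:ℝ)/2) • v‖ := by
        have he : ((1:ℝ)/2) • v - v = -(((1:ℝ)/2) • v) := by
          nth_rewrite 2 [← one_smul ℝ v]
          rw [← sub_smul, ← neg_smul]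
          norm_num
        rw [he, norm_neg]
      linarith
    rw [hS] at hhalf
    simp only [Set.mem_setOf_eq, not_forall] at hhalf
    obtain ⟨x, hxS, hxlt⟩ := hhalf
    push_neg at hxlt
    -- from ‖v/2 - x‖ ≤ ‖v/2‖ deduce ⟪x, v - x⟫ ≥ 0
    have hkey : ¬ (‖((1:ℝ)/2) • v‖ < ‖((1:ℝ)/2) • v - x‖) := not_lt.mpr hxlt
    rw [vor_key_iff] at hkey
    push_neg at hkey
    rw [real_inner_smul_left] at hkey
    have hinner : (0:ℝ) ≤ ⟪x, v - x⟫ := by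
      rw [inner_sub_right, real_inner_self_eq_norm_sq, real_inner_comm]
      linarith
    have := hvind x (v - x) (hSΛ hxS) (Λ.sub_mem hvΛ (hSΛ hxS))
      (by abel) hinner
    rcases this with h | h
    · exact absurd h (hSne x hxS)
    · rw [sub_eq_zero] at h
      rw [h]; exact hxS
end
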